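/- arXiv:1711.01931 — 6 statements merged into one kernel-verified Lean document; each statement's English description precedes it below -/
import Mathlib

section
/- Let d ≥ 3 and let Φ : [0,∞) × ℝ → [0,∞) be continuous such that for every r, t ↦ Φ(r,t) is nondecreasing and concave on [0,∞) and Φ(r,t) = 0 for all t ≤ 0. Let u, v : ℝ^d → ℝ be nonnegative radial C² functions with Δu(x) = Φ(‖x‖, u(x)) and Δv(x) = Φ(‖x‖, v(x)) for all x ∈ ℝ^d. If u(0) = v(0) > 0, then u = v on all of ℝ^d. -/
open MeasureTheory Filter Set

/-- The Euclidean Laplacian of `u` at `x`: the sum of the pure second derivatives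
in the coordinate directions. -/
noncomputable def laplacian {d : ℕ} (u : EuclideanSpace ℝ (Fin d) → ℝ)
    (x : EuclideanSpace ℝ (Fin d)) : ℝ :=
  ∑ i : Fin d, iteratedFDeriv ℝ 2 u x
    ![EuclideanSpace.single i (1 : ℝ), EuclideanSpace.single i (1 : ℝ)]

section Aux
open intervalIntegral
variable {E : Type*} [NormedAddCommGroup E] [NormedSpace ℝ E]

lemma line_hasDerivAt (u : E → ℝ) (hu : ContDiff ℝ 2 u) (x w : E) (t : ℝ) :
    HasDerivAt (fun s : ℝ => u (x + s • w)) (fderiv ℝ u (x + t • w) w) t := by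
  have hcurve : HasDerivAt (fun s : ℝ => x + s • w) w t := by
    simpa using ((hasDerivAt_id t).smul_const w).const_add x
  exact (hu.differentiable two_ne_zero (x + t • w)).hasFDerivAt.comp_hasDerivAt t hcurve

lemma second_line_deriv (u : E → ℝ) (hu : ContDiff ℝ 2 u) (x w : E) :
    iteratedFDeriv ℝ 2 u x ![w, w] = deriv (deriv (fun s : ℝ => u (x + s • w))) 0 := by
  have hderiv : deriv (fun s : ℝ => u (x + s • w)) = fun t => fderiv ℝ u (x + t • w) w :=
    funext fun t => (line_hasDerivAt u hu x w t).deriv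
  have hdiff : Differentiable ℝ (fderiv ℝ u) := by
    have := contDiff_succ_iff_fderiv.mp (by norm_num at hu ⊢; exact hu : ContDiff ℝ (1+1) u)
    exact this.2.2.differentiable one_ne_zero
  have hcurve : HasDerivAt (fun s : ℝ => x + s • w) w 0 := by
    simpa using ((hasDerivAt_id (0:ℝ)).smul_const w).const_add x
  have h2 : HasDerivAt (fun t : ℝ => fderiv ℝ u (x + t • w) w)
      (fderiv ℝ (fderiv ℝ u) x w w) 0 := by
    have h3 : HasDerivAt (fun t : ℝ => fderiv ℝ u (x + t • w))
        (fderiv ℝ (fderiv ℝ u) x w) 0 := by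
      have := ((hdiff (x + (0:ℝ) • w)).hasFDerivAt).comp_hasDerivAt (0:ℝ) hcurve
      rw [zero_smul, add_zero] at this; exact this
    simpa using h3.clm_apply (hasDerivAt_const (0:ℝ) w)
  rw [iteratedFDeriv_two_apply, hderiv]
  simp only [Matrix.cons_val_zero, Matrix.cons_val_one, Matrix.head_cons]
  exact h2.deriv.symm

lemma norm_single_pair {d : ℕ} (r t : ℝ) {i j : Fin d} (hij : i ≠ j) :
    ‖(r • EuclideanSpace.single i (1:ℝ) + t • EuclideanSpace.single j (1:ℝ) :
      EuclideanSpace ℝ (Fin d))‖ = Real.sqrt (r^2 + t^2) := by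
  have h1 : ‖(r • EuclideanSpace.single i (1:ℝ) + t • EuclideanSpace.single j (1:ℝ) :
      EuclideanSpace ℝ (Fin d))‖^2 = r^2 + t^2 := by
    rw [norm_add_sq_real]
    have hin : inner ℝ (r • EuclideanSpace.single i (1:ℝ) : EuclideanSpace ℝ (Fin d))
        (t • EuclideanSpace.single j (1:ℝ)) = (0:ℝ) := by
      simp [real_inner_smul_left, inner_smul_right, EuclideanSpace.inner_single_left,
        EuclideanSpace.single_apply, hij.symm]
    rw [hin]
    simp [norm_smul, EuclideanSpace.norm_single, sq_abs]
  rw [← h1, Real.sqrt_sq (norm_nonneg _)]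

lemma radial_profile {d : ℕ} [NeZero d] {Φ : ℝ → ℝ → ℝ} {u : EuclideanSpace ℝ (Fin d) → ℝ}
    (hu_smooth : ContDiff ℝ 2 u)
    (hu_rad : ∀ x y, ‖x‖ = ‖y‖ → u x = u y)
    (hu_sol : ∀ x, laplacian u x = Φ ‖x‖ (u x))
    {f : ℝ → ℝ} (hf : ∀ r, f r = u (r • EuclideanSpace.single (0 : Fin d) (1:ℝ))) :
    ContDiff ℝ 2 f ∧ (∀ x, u x = f ‖x‖) ∧ deriv f 0 = 0 ∧
      ∀ r, 0 < r → deriv (deriv f) r + ((d:ℝ) - 1) * (deriv f r / r) = Φ r (f r) := by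
  set e : Fin d → EuclideanSpace ℝ (Fin d) := fun i => EuclideanSpace.single i (1:ℝ) with he
  have hnorme : ∀ i : Fin d, ‖e i‖ = 1 := fun i => by
    simp [he, EuclideanSpace.norm_single]
  have hfeq : f = fun r => u (r • e 0) := funext fun r => hf r
  have hsmooth : ContDiff ℝ 2 f := by
    rw [hfeq]
    exact hu_smooth.comp ((contDiff_id.smul contDiff_const))
  have hrad : ∀ x, u x = f ‖x‖ := by
    intro x
    rw [hf]
    apply hu_rad
    rw [norm_smul, hnorme, Real.norm_eq_abs, abs_norm, mul_one]
  have hfd : Differentiable ℝ f := hsmooth.differentiable two_ne_zero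
  have hfd1 : Differentiable ℝ (deriv f) := by
    have := contDiff_succ_iff_deriv.mp (by norm_num at hsmooth ⊢; exact hsmooth : ContDiff ℝ (1+1) f)
    exact this.2.2.differentiable one_ne_zero
  have heven : ∀ t, f (-t) = f t := by
    intro t
    rw [hf, hf]
    apply hu_rad
    rw [norm_smul, norm_smul]
    simp
  have hf'0 : deriv f 0 = 0 := by
    have h1 : (fun t : ℝ => f (-t)) = f := funext heven
    have h2 := deriv_comp_neg f (0:ℝ)
    rw [h1, neg_zero] at h2
    linarith
  refine ⟨hsmooth, hrad, hf'0, ?_⟩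
  intro r hr
  -- The d second directional derivatives at x = r • e 0
  set x : EuclideanSpace ℝ (Fin d) := r • e 0 with hx
  have hnx : ‖x‖ = r := by
    rw [hx, norm_smul, hnorme, Real.norm_eq_abs, abs_of_pos hr, mul_one]
  -- term i = 0
  have hterm0 : iteratedFDeriv ℝ 2 u x ![e 0, e 0] = deriv (deriv f) r := by
    rw [second_line_deriv u hu_smooth x (e 0)]
    have hline : (fun s : ℝ => u (x + s • e 0)) = fun s => f (r + s) := by
      funext s
      rw [hf, hx, ← add_smul]
    rw [hline]
    have hd1 : deriv (fun s : ℝ => f (r + s)) = fun s => deriv f (r + s) :=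
      funext fun s => deriv_comp_const_add f r s
    rw [hd1]
    have := deriv_comp_const_add (deriv f) r 0
    rw [add_zero] at this
    exact this
  -- terms i ≠ 0
  have htermi : ∀ i : Fin d, i ≠ 0 →
      iteratedFDeriv ℝ 2 u x ![e i, e i] = deriv f r / r := by
    intro i hi
    rw [second_line_deriv u hu_smooth x (e i)]
    set h : ℝ → ℝ := fun t => Real.sqrt (r^2 + t^2) with hh
    have hhpos : ∀ t, 0 < h t := by
      intro t
      rw [hh]
      have : (0:ℝ) < r^2 + t^2 := by positivity
      exact Real.sqrt_pos.mpr this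
    have hh0 : h 0 = r := by
      rw [hh]; simp; exact Real.sqrt_sq hr.le
    have hline : (fun s : ℝ => u (x + s • e i)) = fun s => f (h s) := by
      funext s
      rw [hrad (x + s • e i), hx]
      congr 1
      exact norm_single_pair r s (Ne.symm hi)
    rw [hline]
    have hhd : ∀ t, HasDerivAt h (t / h t) t := by
      intro t
      have hin : HasDerivAt (fun t : ℝ => r^2 + t^2) (2*t) t := by
        simpa using ((hasDerivAt_pow 2 t).const_add (r^2))
      have hs : (r^2 + t^2) ≠ 0 := by positivity
      have := (Real.hasDerivAt_sqrt hs).comp t hin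
      refine this.congr_deriv ?_
      rw [hh]
      field_simp
    have hd1 : deriv (fun s => f (h s)) = fun s => deriv f (h s) * (s / h s) :=
      funext fun s => ((hfd (h s)).hasDerivAt.comp s (hhd s)).deriv
    rw [hd1]
    have hA : HasDerivAt (fun t => deriv f (h t)) (deriv (deriv f) (h 0) * (0 / h 0)) 0 :=
      (hfd1 (h 0)).hasDerivAt.comp 0 (hhd 0)
    have hB : HasDerivAt (fun t : ℝ => t / h t)
        ((1 * h 0 - 0 * (0 / h 0)) / (h 0)^2) 0 :=
      (hasDerivAt_id 0).div (hhd 0) (ne_of_gt (hhpos 0))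
    have hAB : HasDerivAt (fun t => deriv f (h t) * (t / h t)) _ 0 := hA.mul hB
    rw [hAB.deriv]
    rw [hh0]
    field_simp
    ring
  -- sum them up
  have hlap := hu_sol x
  rw [laplacian] at hlap
  rw [hnx] at hlap
  have hsum : ∑ i : Fin d, iteratedFDeriv ℝ 2 u x ![e i, e i]
      = deriv (deriv f) r + ((d:ℝ) - 1) * (deriv f r / r) := by
    rw [← Finset.add_sum_erase _ _ (Finset.mem_univ (0 : Fin d)), hterm0]
    congr 1
    rw [Finset.sum_congr rfl (fun i hi => htermi i (Finset.ne_of_mem_erase hi))]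
    rw [Finset.sum_const, Finset.card_erase_of_mem (Finset.mem_univ _)]
    simp only [Finset.card_univ, Fintype.card_fin, nsmul_eq_mul]
    congr 1
    have : 1 ≤ d := Nat.one_le_iff_ne_zero.mpr (NeZero.ne d)
    push_cast [Nat.cast_sub this]
    ring
  rw [hsum] at hlap
  have : f r = u x := by rw [hrad x, hnx]
  rw [← this] at hlap
  exact hlap


lemma profile_integral_eq {Φ : ℝ → ℝ → ℝ} {n : ℕ}
    (hΦ_cont : ContinuousOn (fun q : ℝ × ℝ => Φ q.1 q.2) (Ici 0 ×ˢ univ))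
    {f : ℝ → ℝ} (hf : ContDiff ℝ 2 f) (hf0 : deriv f 0 = 0)
    (hode : ∀ r, 0 < r → deriv (deriv f) r + (n:ℝ) * (deriv f r / r) = Φ r (f r)) :
    ∀ r, 0 < r → deriv f r * r^n = ∫ s in (0:ℝ)..r, s^n * Φ s (f s) := by
  have hfd : Differentiable ℝ f := hf.differentiable two_ne_zero
  have hfd1 : Differentiable ℝ (deriv f) := by
    have := contDiff_succ_iff_deriv.mp (by norm_num at hf ⊢; exact hf : ContDiff ℝ (1+1) f)
    exact this.2.2.differentiable one_ne_zero
  have hcont1 : Continuous (deriv f) := hfd1.continuous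
  set ψ : ℝ → ℝ := fun s => s^n * Φ s (f s) with hψ
  have hψcont : ContinuousOn ψ (Ici 0) := by
    apply ContinuousOn.mul (continuousOn_pow n)
    have hmap : MapsTo (fun s : ℝ => (s, f s)) (Ici 0) (Ici 0 ×ˢ univ) :=
      fun s hs => ⟨hs, mem_univ _⟩
    exact hΦ_cont.comp ((continuous_id.prodMk hfd.continuous).continuousOn) hmap
  set F : ℝ → ℝ := fun r => deriv f r * r^n with hF
  have hFc : Continuous F := hcont1.mul (continuous_pow n)
  have hF0 : F 0 = 0 := by simp [hF, hf0]
  have hFd : ∀ r, 0 < r → HasDerivAt F (ψ r) r := by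
    intro r hr
    have h1 : HasDerivAt F (deriv (deriv f) r * r^n + deriv f r * (↑n * r^(n-1))) r :=
      (hfd1 r).hasDerivAt.mul (hasDerivAt_pow n r)
    convert h1 using 1
    have h2 : deriv (deriv f) r = Φ r (f r) - n * (deriv f r / r) := by
      linarith [hode r hr]
    have hr0 : r ≠ 0 := ne_of_gt hr
    rcases Nat.eq_zero_or_pos n with hn | hn
    · subst hn; simp [hψ, h2]
    · have hrn : r^n = r^(n-1) * r := by
        rw [← pow_succ]; congr 1; omega
      rw [hψ, h2, hrn]
      field_simp
      rw [hrn]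
      ring
  have hψint : ∀ b c : ℝ, 0 ≤ b → 0 ≤ c → IntervalIntegrable ψ MeasureTheory.volume b c := by
    intro b c hb hc
    apply ContinuousOn.intervalIntegrable
    apply hψcont.mono
    rw [uIcc_eq_union]
    rintro x (hx | hx)
    · exact le_trans hb hx.1
    · exact le_trans hc hx.1
  intro r hr
  -- limit argument
  have hIoo : Ioo (0:ℝ) r ∈ nhdsWithin (0:ℝ) (Ioi 0) :=
    Ioo_mem_nhdsGT_of_mem ⟨le_refl 0, hr⟩
  set G : ℝ → ℝ := fun ε => ∫ s in (0:ℝ)..ε, ψ s with hG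
  have hkey : ∀ ε ∈ Ioo (0:ℝ) r, G ε = (∫ s in (0:ℝ)..r, ψ s) - F r + F ε := by
    intro ε hε
    have hsub : F r - F ε = ∫ s in ε..r, ψ s := by
      apply (integral_eq_sub_of_hasDerivAt _ _).symm
      · intro t ht
        rw [uIcc_of_le hε.2.le] at ht
        exact hFd t (lt_of_lt_of_le hε.1 ht.1)
      · exact hψint ε r hε.1.le hr.le
    have hadd : G ε + ∫ s in ε..r, ψ s = ∫ s in (0:ℝ)..r, ψ s :=
      integral_add_adjacent_intervals (hψint 0 ε le_rfl hε.1.le) (hψint ε r hε.1.le hr.le)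
    rw [← hsub] at hadd
    linarith
  -- G tends to 0
  obtain ⟨C, hC⟩ := (isCompact_Icc : IsCompact (Icc (0:ℝ) r)).exists_bound_of_continuousOn
    (hψcont.mono Icc_subset_Ici_self)
  have hGsmall : ∀ ε ∈ Ioo (0:ℝ) r, ‖G ε‖ ≤ C * |ε| := by
    intro ε hε
    have := intervalIntegral.norm_integral_le_of_norm_le_const
      (C := C) (f := ψ) (a := 0) (b := ε) ?_
    · simpa using this
    · intro x hx
      rw [uIoc_of_le hε.1.le] at hx
      exact hC x ⟨hx.1.le, hx.2.trans hε.2.le⟩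
  have hGlim : Tendsto G (nhdsWithin 0 (Ioi 0)) (nhds 0) := by
    apply squeeze_zero_norm' (Filter.eventually_of_mem hIoo hGsmall)
    have : Tendsto (fun ε : ℝ => C * |ε|) (nhdsWithin 0 (Ioi 0)) (nhds (C * |0|)) :=
      ((continuous_const.mul (continuous_abs)).tendsto 0).mono_left nhdsWithin_le_nhds
    simpa using this
  have hGlim2 : Tendsto G (nhdsWithin 0 (Ioi 0))
      (nhds ((∫ s in (0:ℝ)..r, ψ s) - F r + F 0)) := by
    apply Tendsto.congr' (Filter.eventually_of_mem hIoo (fun ε hε => (hkey ε hε).symm))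
    apply Tendsto.const_add
    exact (hFc.tendsto 0).mono_left nhdsWithin_le_nhds
  have huniq := tendsto_nhds_unique hGlim hGlim2
  rw [hF0] at huniq
  have : F r = ∫ s in (0:ℝ)..r, ψ s := by linarith
  exact this


lemma profile_comparison {Φ : ℝ → ℝ → ℝ} {n : ℕ}
    (hΦ_cont : ContinuousOn (fun q : ℝ × ℝ => Φ q.1 q.2) (Ici 0 ×ˢ univ))
    (hΦ_nonneg : ∀ r, 0 ≤ r → ∀ t, 0 ≤ Φ r t)
    (hΦ_mono : ∀ r, 0 ≤ r → MonotoneOn (Φ r) (Ici 0))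
    (hΦ_conc : ∀ r, 0 ≤ r → ConcaveOn ℝ (Ici 0) (Φ r))
    (hΦ_zero : ∀ r, 0 ≤ r → ∀ t ≤ (0 : ℝ), Φ r t = 0)
    {f g : ℝ → ℝ} (hf : ContDiff ℝ 2 f) (hg : ContDiff ℝ 2 g)
    (hfint : ∀ r, 0 < r → deriv f r * r^n = ∫ s in (0:ℝ)..r, s^n * Φ s (f s))
    (hgint : ∀ r, 0 < r → deriv g r * r^n = ∫ s in (0:ℝ)..r, s^n * Φ s (g s))
    (hf0' : deriv f 0 = 0) (hg0' : deriv g 0 = 0)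
    (h0 : f 0 = g 0) (hpos : 0 < f 0) :
    ∀ r, 0 ≤ r → f r = g r := by
  have hfd : Differentiable ℝ f := hf.differentiable two_ne_zero
  have hgd : Differentiable ℝ g := hg.differentiable two_ne_zero
  have hfd1 : Differentiable ℝ (deriv f) := by
    have := contDiff_succ_iff_deriv.mp (by norm_num at hf ⊢; exact hf : ContDiff ℝ (1+1) f)
    exact this.2.2.differentiable one_ne_zero
  have hgd1 : Differentiable ℝ (deriv g) := by
    have := contDiff_succ_iff_deriv.mp (by norm_num at hg ⊢; exact hg : ContDiff ℝ (1+1) g)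
    exact this.2.2.differentiable one_ne_zero
  set a : ℝ := f 0 with ha
  -- monotonicity: f and g are ≥ a on [0, ∞)
  have hmono : ∀ (h : ℝ → ℝ), ContDiff ℝ 2 h → deriv h 0 = 0 →
      (∀ r, 0 < r → deriv h r * r^n = ∫ s in (0:ℝ)..r, s^n * Φ s (h s)) →
      MonotoneOn h (Ici 0) := by
    intro h hh hh0 hhint
    have hhd : Differentiable ℝ h := hh.differentiable two_ne_zero
    apply monotoneOn_of_deriv_nonneg (convex_Ici 0) hhd.continuous.continuousOn
      (fun x _ => (hhd x).differentiableWithinAt)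
    intro x hx
    rw [interior_Ici] at hx
    have hx' : (0:ℝ) < x := hx
    have hint := hhint x hx'
    have hnn : 0 ≤ ∫ s in (0:ℝ)..x, s^n * Φ s (h s) := by
      apply intervalIntegral.integral_nonneg hx'.le
      intro s hs
      exact mul_nonneg (pow_nonneg hs.1 n) (hΦ_nonneg s hs.1 _)
    have hxpow : (0:ℝ) < x^n := pow_pos hx' n
    nlinarith [hint]
  have hfmono := hmono f hf hf0' hfint
  have hgmono := hmono g hg hg0' hgint
  have hfge : ∀ r, 0 ≤ r → a ≤ f r := fun r hr => hfmono (self_mem_Ici) hr hr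
  have hgge : ∀ r, 0 ≤ r → a ≤ g r := by
    intro r hr
    rw [h0]
    exact hgmono (self_mem_Ici) hr hr
  -- main claim on [0, R]
  suffices hR : ∀ R, 0 < R → ∀ r ∈ Icc (0:ℝ) R, f r = g r by
    intro r hr
    exact hR (r+1) (by linarith) r ⟨hr, by linarith⟩
  intro R hR
  -- upper bound B for f and g on [0, R]
  obtain ⟨Bf, hBf⟩ : ∃ Bf, ∀ s ∈ Icc (0:ℝ) R, f s ≤ Bf := by
    obtain ⟨x0, hx0, hx0'⟩ := (isCompact_Icc : IsCompact (Icc (0:ℝ) R)).exists_isMaxOn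
      (nonempty_Icc.mpr hR.le) hfd.continuous.continuousOn
    exact ⟨f x0, fun s hs => hx0' hs⟩
  obtain ⟨Bg, hBg⟩ : ∃ Bg, ∀ s ∈ Icc (0:ℝ) R, g s ≤ Bg := by
    obtain ⟨x0, hx0, hx0'⟩ := (isCompact_Icc : IsCompact (Icc (0:ℝ) R)).exists_isMaxOn
      (nonempty_Icc.mpr hR.le) hgd.continuous.continuousOn
    exact ⟨g x0, fun s hs => hx0' hs⟩
  set Bc : ℝ := max (max Bf Bg) a with hBc
  have hBfle : ∀ s ∈ Icc (0:ℝ) R, f s ≤ Bc := fun s hs =>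
    le_trans (hBf s hs) (le_trans (le_max_left _ _) (le_max_left _ _))
  have hBgle : ∀ s ∈ Icc (0:ℝ) R, g s ≤ Bc := fun s hs =>
    le_trans (hBg s hs) (le_trans (le_max_right _ _) (le_max_left _ _))
  have haB : a ≤ Bc := le_max_right _ _
  -- Lipschitz constant L
  obtain ⟨r₀, hr₀mem, hr₀'⟩ := (isCompact_Icc : IsCompact (Icc (0:ℝ) R)).exists_isMaxOn
    (nonempty_Icc.mpr hR.le)
    (by
      have : ContinuousOn (fun r : ℝ => Φ r Bc) (Icc 0 R) := by
        have hmap : MapsTo (fun r : ℝ => (r, Bc)) (Icc 0 R) (Ici 0 ×ˢ univ) :=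
          fun s hs => ⟨hs.1, mem_univ _⟩
        exact hΦ_cont.comp ((continuous_id.prodMk continuous_const).continuousOn) hmap
      exact this)
  have hr₀ : ∀ r ∈ Icc (0:ℝ) R, Φ r Bc ≤ Φ r₀ Bc := fun r hr => hr₀' hr
  set L : ℝ := Φ r₀ Bc / a with hL
  have hL0 : 0 ≤ L := div_nonneg (hΦ_nonneg r₀ hr₀mem.1 _) hpos.le
  have hLip : ∀ r ∈ Icc (0:ℝ) R, ∀ t₁ t₂, a ≤ t₁ → t₁ ≤ Bc → a ≤ t₂ → t₂ ≤ Bc →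
      |Φ r t₂ - Φ r t₁| ≤ L * |t₂ - t₁| := by
    have key : ∀ r ∈ Icc (0:ℝ) R, ∀ t₁ t₂, a ≤ t₁ → a ≤ t₂ → t₂ ≤ Bc → t₁ ≤ t₂ →
        Φ r t₁ ≤ Φ r t₂ ∧ Φ r t₂ - Φ r t₁ ≤ L * (t₂ - t₁) := by
      intro r hr t₁ t₂ h1 h2 h3 h12
      have ht₁0 : (0:ℝ) ≤ t₁ := le_trans hpos.le h1
      have ht₂0 : (0:ℝ) ≤ t₂ := le_trans hpos.le h2
      constructor
      · exact hΦ_mono r hr.1 ht₁0 ht₂0 h12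
      rcases eq_or_lt_of_le h12 with heq | hlt
      · rw [heq]; simp
      · have hslope := (hΦ_conc r hr.1).slope_anti_adjacent
          (self_mem_Ici : (0:ℝ) ∈ Ici 0) (mem_Ici.mpr ht₂0)
          (lt_of_lt_of_le hpos h1) hlt
        rw [hΦ_zero r hr.1 0 le_rfl] at hslope
        have hq1 : (Φ r t₁ - 0) / (t₁ - 0) ≤ L := by
          rw [sub_zero, sub_zero, hL]
          apply div_le_div₀ (hΦ_nonneg r₀ hr₀mem.1 _) _ hpos h1
          calc Φ r t₁ ≤ Φ r Bc := hΦ_mono r hr.1 ht₁0 (le_trans ht₂0 h3)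
                (le_trans h12 h3)
            _ ≤ Φ r₀ Bc := hr₀ r hr
        have hq2 : (Φ r t₂ - Φ r t₁) / (t₂ - t₁) ≤ L := le_trans hslope hq1
        rw [div_le_iff₀ (by linarith)] at hq2
        linarith
    intro r hr t₁ t₂ h1 h1' h2 h2'
    rcases le_total t₁ t₂ with h12 | h21
    · obtain ⟨hm, hs⟩ := key r hr t₁ t₂ h1 h2 h2' h12
      rw [abs_of_nonneg (by linarith), abs_of_nonneg (by linarith)]
      exact hs
    · obtain ⟨hm, hs⟩ := key r hr t₂ t₁ h2 h1 h1' h21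
      rw [abs_of_nonpos (by linarith), abs_of_nonpos (by linarith)]
      linarith
  -- Gronwall setup
  set D : ℝ → ℝ := fun r => |f r - g r| with hD
  have hDcont : Continuous D := (hfd.continuous.sub hgd.continuous).abs
  have hD0 : ∀ r, 0 ≤ D r := fun r => abs_nonneg _
  set EE : ℝ → ℝ := fun r => ∫ s in (0:ℝ)..r, D s with hEE
  have hEder : ∀ r : ℝ, HasDerivAt EE (D r) r := by
    intro r
    exact intervalIntegral.integral_hasDerivAt_right
      (hDcont.intervalIntegrable (μ := MeasureTheory.volume) 0 r)
      (hDcont.stronglyMeasurableAtFilter MeasureTheory.volume (nhds r))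
      hDcont.continuousAt
  have hE0 : EE 0 = 0 := by simp [hEE]
  have hEmono : ∀ s t : ℝ, s ≤ t → EE s ≤ EE t := by
    intro s t hst
    have := intervalIntegral.integral_add_adjacent_intervals
      (hDcont.intervalIntegrable (μ := MeasureTheory.volume) 0 s)
      (hDcont.intervalIntegrable (μ := MeasureTheory.volume) s t)
    have hnn : 0 ≤ ∫ x in s..t, D x :=
      intervalIntegral.integral_nonneg hst (fun x _ => hD0 x)
    rw [hEE]
    dsimp only
    linarith [this]
  have hEnn : ∀ r, 0 ≤ r → 0 ≤ EE r := fun r hr => le_trans (le_of_eq hE0.symm) (hEmono 0 r hr)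
  -- pointwise bound on |deriv f - deriv g|
  have hwder : ∀ s ∈ Icc (0:ℝ) R, |deriv f s - deriv g s| ≤ L * EE s := by
    intro s hs
    rcases eq_or_lt_of_le hs.1 with h0s | h0s
    · rw [← h0s, hf0', hg0', sub_zero, abs_zero]
      rw [← h0s] at *
      have := hEnn 0 le_rfl
      have := hE0
      nlinarith [hL0]
    · have hif := hfint s h0s
      have hig := hgint s h0s
      have hspow : (0:ℝ) < s^n := pow_pos h0s n
      have hsub : (deriv f s - deriv g s) * s^n
          = ∫ t in (0:ℝ)..s, (t^n * Φ t (f t) - t^n * Φ t (g t)) := by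
        rw [intervalIntegral.integral_sub]
        · rw [← hif, ← hig]; ring
        · apply ContinuousOn.intervalIntegrable
          apply ContinuousOn.mul (continuousOn_pow n)
          have hmap : MapsTo (fun t : ℝ => (t, f t)) (uIcc 0 s) (Ici 0 ×ˢ univ) := by
            intro t ht
            rw [uIcc_of_le h0s.le] at ht
            exact ⟨ht.1, mem_univ _⟩
          exact hΦ_cont.comp ((continuous_id.prodMk hfd.continuous).continuousOn) hmap
        · apply ContinuousOn.intervalIntegrable
          apply ContinuousOn.mul (continuousOn_pow n)
          have hmap : MapsTo (fun t : ℝ => (t, g t)) (uIcc 0 s) (Ici 0 ×ˢ univ) := by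
            intro t ht
            rw [uIcc_of_le h0s.le] at ht
            exact ⟨ht.1, mem_univ _⟩
          exact hΦ_cont.comp ((continuous_id.prodMk hgd.continuous).continuousOn) hmap
      have hbound : |∫ t in (0:ℝ)..s, (t^n * Φ t (f t) - t^n * Φ t (g t))|
          ≤ s^n * (L * EE s) := by
        calc |∫ t in (0:ℝ)..s, (t^n * Φ t (f t) - t^n * Φ t (g t))|
            ≤ ∫ t in (0:ℝ)..s, |t^n * Φ t (f t) - t^n * Φ t (g t)| :=
              intervalIntegral.abs_integral_le_integral_abs h0s.le
          _ ≤ ∫ t in (0:ℝ)..s, s^n * (L * D t) := by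
              apply intervalIntegral.integral_mono_on h0s.le
              · apply ContinuousOn.intervalIntegrable
                apply ContinuousOn.abs
                apply ContinuousOn.sub
                · apply ContinuousOn.mul (continuousOn_pow n)
                  have hmap : MapsTo (fun t : ℝ => (t, f t)) (uIcc 0 s) (Ici 0 ×ˢ univ) := by
                    intro t ht
                    rw [uIcc_of_le h0s.le] at ht
                    exact ⟨ht.1, mem_univ _⟩
                  exact hΦ_cont.comp ((continuous_id.prodMk hfd.continuous).continuousOn) hmap
                · apply ContinuousOn.mul (continuousOn_pow n)
                  have hmap : MapsTo (fun t : ℝ => (t, g t)) (uIcc 0 s) (Ici 0 ×ˢ univ) := by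
                    intro t ht
                    rw [uIcc_of_le h0s.le] at ht
                    exact ⟨ht.1, mem_univ _⟩
                  exact hΦ_cont.comp ((continuous_id.prodMk hgd.continuous).continuousOn) hmap
              · exact (continuous_const.mul (continuous_const.mul hDcont)).intervalIntegrable 0 s
              · intro t ht
                have htmem : t ∈ Icc (0:ℝ) R := ⟨ht.1, le_trans ht.2 (le_trans hs.2 le_rfl)⟩
                have hfB := hBfle t htmem
                have hgB := hBgle t htmem
                have hfa := hfge t ht.1
                have hga := hgge t ht.1
                have hlip := hLip t htmem (g t) (f t) hga hgB hfa hfB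
                rw [← mul_sub, abs_mul, abs_of_nonneg (pow_nonneg ht.1 n)]
                calc t^n * |Φ t (f t) - Φ t (g t)| ≤ t^n * (L * |f t - g t|) := by
                      apply mul_le_mul_of_nonneg_left hlip (pow_nonneg ht.1 n)
                  _ ≤ s^n * (L * D t) := by
                      apply mul_le_mul_of_nonneg_right
                        (pow_le_pow_left₀ ht.1 ht.2 n)
                      exact mul_nonneg hL0 (hD0 t)
          _ = s^n * (L * EE s) := by
              rw [intervalIntegral.integral_const_mul, intervalIntegral.integral_const_mul]
      have habs : |deriv f s - deriv g s| * s^n ≤ s^n * (L * EE s) := by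
        calc |deriv f s - deriv g s| * s^n = |(deriv f s - deriv g s) * s^n| := by
              rw [abs_mul, abs_of_pos hspow]
          _ = |∫ t in (0:ℝ)..s, (t^n * Φ t (f t) - t^n * Φ t (g t))| := by rw [hsub]
          _ ≤ s^n * (L * EE s) := hbound
      nlinarith [habs, hspow]
  -- D r ≤ (L * R) * EE r on [0, R]
  have hDbound : ∀ r ∈ Icc (0:ℝ) R, D r ≤ (L * R) * EE r := by
    intro r hr
    have hw : f r - g r = ∫ s in (0:ℝ)..r, (deriv f s - deriv g s) := by
      rw [intervalIntegral.integral_sub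
        ((hfd1.continuous.intervalIntegrable 0 r)) ((hgd1.continuous.intervalIntegrable 0 r))]
      rw [intervalIntegral.integral_deriv_eq_sub (fun x _ => hfd x)
        (hfd1.continuous.intervalIntegrable 0 r),
        intervalIntegral.integral_deriv_eq_sub (fun x _ => hgd x)
        (hgd1.continuous.intervalIntegrable 0 r)]
      rw [← h0]
      ring
    calc D r = |∫ s in (0:ℝ)..r, (deriv f s - deriv g s)| := by rw [hD]; dsimp only; rw [hw]
      _ ≤ ∫ s in (0:ℝ)..r, |deriv f s - deriv g s| :=
          intervalIntegral.abs_integral_le_integral_abs hr.1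
      _ ≤ ∫ s in (0:ℝ)..r, L * EE r := by
          apply intervalIntegral.integral_mono_on hr.1
          · exact ((hfd1.continuous.sub hgd1.continuous).abs).intervalIntegrable 0 r
          · exact intervalIntegrable_const
          · intro s hsm
            calc |deriv f s - deriv g s| ≤ L * EE s :=
                  hwder s ⟨hsm.1, le_trans hsm.2 hr.2⟩
              _ ≤ L * EE r := mul_le_mul_of_nonneg_left (hEmono s r hsm.2) hL0
      _ = L * EE r * r := by rw [intervalIntegral.integral_const]; ring_nf
      _ ≤ (L * R) * EE r := by
          have h1 := hEnn r hr.1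
          have h2 := mul_le_mul_of_nonneg_left hr.2 (mul_nonneg hL0 h1)
          nlinarith [h2]
  -- Gronwall
  have hgron := norm_le_gronwallBound_of_norm_deriv_right_le
    (f := EE) (f' := D) (δ := 0) (K := L * R) (ε := 0) (a := 0) (b := R)
    ((fun x _ => (hEder x).continuousAt.continuousWithinAt))
    (fun x hx => (hEder x).hasDerivWithinAt)
    (by rw [hE0]; simp)
    (by
      intro x hx
      rw [Real.norm_eq_abs, Real.norm_eq_abs, abs_of_nonneg (hD0 x),
        abs_of_nonneg (hEnn x hx.1)]
      rw [add_zero]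
      exact hDbound x ⟨hx.1, hx.2.le⟩)
  intro r hr
  have hEr := hgron r hr
  rw [gronwallBound_ε0_δ0] at hEr
  rw [Real.norm_eq_abs, abs_of_nonneg (hEnn r hr.1)] at hEr
  have hEzero : EE r = 0 := le_antisymm hEr (hEnn r hr.1)
  have := hDbound r hr
  rw [hEzero] at this
  have hDr : D r = 0 := le_antisymm (by linarith) (hD0 r)
  rw [hD] at hDr
  dsimp only at hDr
  have := abs_eq_zero.mp hDr
  linarith

end Aux

theorem stmt_10 (d : ℕ) (hd : 3 ≤ d)
    (Φ : ℝ → ℝ → ℝ)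
    (hΦ_cont : ContinuousOn (fun q : ℝ × ℝ => Φ q.1 q.2) (Ici 0 ×ˢ univ))
    (hΦ_nonneg : ∀ r, 0 ≤ r → ∀ t, 0 ≤ Φ r t)
    (hΦ_mono : ∀ r, 0 ≤ r → MonotoneOn (Φ r) (Ici 0))
    (hΦ_conc : ∀ r, 0 ≤ r → ConcaveOn ℝ (Ici 0) (Φ r))
    (hΦ_zero : ∀ r, 0 ≤ r → ∀ t ≤ (0 : ℝ), Φ r t = 0)
    (u v : EuclideanSpace ℝ (Fin d) → ℝ)
    (hu_smooth : ContDiff ℝ 2 u) (hv_smooth : ContDiff ℝ 2 v)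
    (hu_nonneg : ∀ x, 0 ≤ u x) (hv_nonneg : ∀ x, 0 ≤ v x)
    (hu_rad : ∀ x y, ‖x‖ = ‖y‖ → u x = u y)
    (hv_rad : ∀ x y, ‖x‖ = ‖y‖ → v x = v y)
    (hu_sol : ∀ x, laplacian u x = Φ ‖x‖ (u x))
    (hv_sol : ∀ x, laplacian v x = Φ ‖x‖ (v x))
    (h0 : u 0 = v 0) (h0pos : 0 < u 0) :
    u = v := by
  haveI : NeZero d := ⟨by omega⟩
  set f : ℝ → ℝ := fun r => u (r • EuclideanSpace.single (0 : Fin d) (1:ℝ)) with hfdef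
  set g : ℝ → ℝ := fun r => v (r • EuclideanSpace.single (0 : Fin d) (1:ℝ)) with hgdef
  obtain ⟨hfs, hfrad, hf0', hfode⟩ := radial_profile hu_smooth hu_rad hu_sol (fun r => rfl)
  obtain ⟨hgs, hgrad, hg0', hgode⟩ := radial_profile hv_smooth hv_rad hv_sol (fun r => rfl)
  set n : ℕ := d - 1 with hn
  have hcast : ((n:ℝ)) = (d:ℝ) - 1 := by
    rw [hn]
    push_cast [Nat.cast_sub (by omega : 1 ≤ d)]
    ring
  have hfode' : ∀ r, 0 < r → deriv (deriv f) r + (n:ℝ) * (deriv f r / r) = Φ r (f r) := by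
    intro r hr; rw [hcast]; exact hfode r hr
  have hgode' : ∀ r, 0 < r → deriv (deriv g) r + (n:ℝ) * (deriv g r / r) = Φ r (g r) := by
    intro r hr; rw [hcast]; exact hgode r hr
  have hfint := profile_integral_eq hΦ_cont hfs hf0' hfode'
  have hgint := profile_integral_eq hΦ_cont hgs hg0' hgode'
  have hfu0 : f 0 = u 0 := by rw [hfdef]; simp
  have hgv0 : g 0 = v 0 := by rw [hgdef]; simp
  have h00 : f 0 = g 0 := by rw [hfu0, hgv0]; exact h0
  have hpos : 0 < f 0 := by rw [hfu0]; exact h0pos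
  have hcomp := profile_comparison hΦ_cont hΦ_nonneg hΦ_mono hΦ_conc hΦ_zero
    hfs hgs hfint hgint hf0' hg0' h00 hpos
  funext x
  rw [hfrad x, hgrad x]
  exact hcomp ‖x‖ (norm_nonneg x)
end

section
/- Let d ≥ 3, let B ⊆ ℝ^d be an open ball, x₀ ∈ B, and let φ : B̄ × ℝ → [0,∞) be continuous with φ(x,t) = 0 for t ≤ 0, such that for every x, t ↦ φ(x,t) is nondecreasing, and φ(x,t) ≤ p(x)(t+1) for all x ∈ B̄, t ≥ 0, where p : B̄ → [0,∞) is continuous. Then for every M > 0 there exists λ₀ > 0 such that for every λ ≥ λ₀, every nonnegative function u, continuous on B̄ and C² on B, satisfying Δu(x) = φ(x, u(x)) in B and u = λ on ∂B, obeys u(x₀) ≥ M. -/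
open MeasureTheory Filter Set

open Topology

lemma line_dd {E : Type*} [NormedAddCommGroup E] [NormedSpace ℝ E]
    {f : E → ℝ} {x : E} (hf : ContDiffAt ℝ 2 f x) (v : E) :
    iteratedFDeriv ℝ 2 f x ![v, v] = deriv (deriv (fun t : ℝ => f (x + t • v))) 0 := by
  obtain ⟨s, hs, hfs⟩ := hf.contDiffOn le_rfl (by simp)
  set U := interior s with hUdef
  have hU : IsOpen U := isOpen_interior
  have hxU : x ∈ U := mem_interior_iff_mem_nhds.2 hs
  have hfU : ContDiffOn ℝ 2 f U := hfs.mono interior_subset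
  have hline : ∀ t : ℝ, HasDerivAt (fun t : ℝ => x + t • v) v t := by
    intro t
    simpa using ((hasDerivAt_id t).smul_const v).const_add x
  have hT : ∀ᶠ t in 𝓝 (0:ℝ), x + t • v ∈ U := by
    have hc : Continuous fun t : ℝ => x + t • v := by continuity
    have h0 : Tendsto (fun t : ℝ => x + t • v) (𝓝 0) (𝓝 x) := by
      simpa using hc.tendsto 0
    exact h0 (hU.mem_nhds hxU)
  have hderiv : ∀ᶠ t in 𝓝 (0:ℝ), deriv (fun t : ℝ => f (x + t • v)) t
      = fderiv ℝ f (x + t • v) v := by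
    filter_upwards [hT] with t ht
    have hdf : HasFDerivAt f (fderiv ℝ f (x + t • v)) (x + t • v) :=
      (((hfU.differentiableOn (by norm_num)).differentiableAt (hU.mem_nhds ht))).hasFDerivAt
    exact (hdf.comp_hasDerivAt t (hline t)).deriv
  have hdf2 : HasFDerivAt (fderiv ℝ f) (fderiv ℝ (fderiv ℝ f) x) x :=
    ((hf.fderiv_right (m := 1) (by norm_num)).differentiableAt one_ne_zero).hasFDerivAt
  have h0 : x + (0:ℝ) • v = x := by simp
  have h2 : HasDerivAt (fun t : ℝ => fderiv ℝ f (x + t • v) v)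
      (fderiv ℝ (fderiv ℝ f) x v v) 0 := by
    have hcomp : HasDerivAt (fun t : ℝ => fderiv ℝ f (x + t • v))
        (fderiv ℝ (fderiv ℝ f) x v) 0 := by
      refine HasFDerivAt.comp_hasDerivAt 0 ?_ (hline 0)
      rw [h0]; exact hdf2
    have := hcomp.clm_apply (hasDerivAt_const 0 v)
    simpa using this
  rw [iteratedFDeriv_two_apply]
  have e1 : deriv (deriv fun t : ℝ => f (x + t • v)) 0
      = deriv (fun t : ℝ => fderiv ℝ f (x + t • v) v) 0 :=
    Filter.EventuallyEq.deriv_eq hderiv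
  rw [e1, h2.deriv]
  simp

lemma dd_nonpos_of_isLocalMax {h : ℝ → ℝ} (hC : ContDiffAt ℝ 2 h 0)
    (hmax : IsLocalMax h 0) : deriv (deriv h) 0 ≤ 0 := by
  by_contra hcon
  push_neg at hcon
  obtain ⟨s, hs, hhs⟩ := hC.contDiffOn le_rfl (by simp)
  set U := interior s with hUdef
  have hU : IsOpen U := isOpen_interior
  have h0U : (0:ℝ) ∈ U := mem_interior_iff_mem_nhds.2 hs
  have hhU : ContDiffOn ℝ 2 h U := hhs.mono interior_subset
  have hd1 : ContDiffOn ℝ 1 (deriv h) U := hhU.deriv_of_isOpen hU (by norm_num)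
  have hdh : DifferentiableOn ℝ h U := hhU.differentiableOn (by norm_num)
  have hf0 : deriv h 0 = 0 := hmax.deriv_eq_zero
  have hfd : HasDerivAt (deriv h) (deriv (deriv h) 0) 0 :=
    (((hd1.differentiableOn one_ne_zero).differentiableAt (hU.mem_nhds h0U))).hasDerivAt
  have hslope := hasDerivAt_iff_tendsto_slope.1 hfd
  have hev : ∀ᶠ t in 𝓝[≠] (0:ℝ), 0 < slope (deriv h) 0 t :=
    hslope.eventually (eventually_gt_nhds hcon)
  have hallev : ∀ᶠ t in 𝓝[≠] (0:ℝ),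
      0 < slope (deriv h) 0 t ∧ t ∈ U ∧ h t ≤ h 0 := by
    filter_upwards [hev, eventually_nhdsWithin_of_eventually_nhds (hU.eventually_mem h0U),
      eventually_nhdsWithin_of_eventually_nhds hmax] with t h1 h2 h3
    exact ⟨h1, h2, h3⟩
  rw [eventually_nhdsWithin_iff, Metric.eventually_nhds_iff] at hallev
  obtain ⟨δ, hδ0, hδ⟩ := hallev
  set b := δ / 2 with hbdef
  have hb0 : 0 < b := by positivity
  have hbδ : ∀ t : ℝ, t ∈ Icc (0:ℝ) b → dist t 0 < δ := by
    intro t ht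
    rw [Real.dist_eq, sub_zero, abs_of_nonneg ht.1]
    calc t ≤ b := ht.2
    _ < δ := by rw [hbdef]; linarith
  have hsubU : Icc (0:ℝ) b ⊆ U := by
    intro t ht
    rcases eq_or_ne t 0 with rfl | htne
    · exact h0U
    · exact (hδ (hbδ t ht) (by simpa using htne)).2.1
  have hcont : ContinuousOn h (Icc (0:ℝ) b) := (hdh.mono hsubU).continuousOn
  have hpos : ∀ t ∈ interior (Icc (0:ℝ) b), 0 < deriv h t := by
    intro t ht
    rw [interior_Icc] at ht
    have htne : t ≠ 0 := ne_of_gt ht.1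
    have hsl := (hδ (hbδ t ⟨ht.1.le, ht.2.le⟩) (by simpa using htne)).1
    rw [slope_def_field] at hsl
    have hq : deriv h t / t > 0 := by
      rw [hf0, sub_zero, sub_zero] at hsl; exact hsl
    have := mul_pos hq ht.1
    rwa [div_mul_cancel₀] at this
    exact htne
  have hmono : StrictMonoOn h (Icc (0:ℝ) b) :=
    strictMonoOn_of_deriv_pos (convex_Icc 0 b) hcont hpos
  have h1 : h 0 < h b := hmono ⟨le_rfl, hb0.le⟩ ⟨hb0.le, le_rfl⟩ hb0
  have h2 : h b ≤ h 0 := (hδ (hbδ b ⟨hb0.le, le_rfl⟩) (by simpa using ne_of_gt hb0)).2.2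
  linarith

lemma iteratedFDeriv_two_sub' {E : Type*} [NormedAddCommGroup E] [NormedSpace ℝ E]
    {f g : E → ℝ} {x : E} (hf : ContDiffAt ℝ 2 f x) (hg : ContDiffAt ℝ 2 g x)
    (m : Fin 2 → E) :
    iteratedFDeriv ℝ 2 (fun y => f y - g y) x m
      = iteratedFDeriv ℝ 2 f x m - iteratedFDeriv ℝ 2 g x m := by
  have hev : (fderiv ℝ fun y => f y - g y) =ᶠ[𝓝 x]
      fun y => fderiv ℝ f y - fderiv ℝ g y := by
    filter_upwards [hf.eventually (by simp), hg.eventually (by simp)] with y hfy hgy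
    exact fderiv_fun_sub (hfy.differentiableAt (by norm_num)) (hgy.differentiableAt (by norm_num))
  have hdf : DifferentiableAt ℝ (fderiv ℝ f) x :=
    (hf.fderiv_right (m := 1) (by norm_num)).differentiableAt one_ne_zero
  have hdg : DifferentiableAt ℝ (fderiv ℝ g) x :=
    (hg.fderiv_right (m := 1) (by norm_num)).differentiableAt one_ne_zero
  rw [iteratedFDeriv_two_apply, iteratedFDeriv_two_apply, iteratedFDeriv_two_apply,
    hev.fderiv_eq, fderiv_fun_sub hdf hdg]
  simp

lemma laplacian_sub {d : ℕ} {f g : EuclideanSpace ℝ (Fin d) → ℝ}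
    {x : EuclideanSpace ℝ (Fin d)} (hf : ContDiffAt ℝ 2 f x) (hg : ContDiffAt ℝ 2 g x) :
    laplacian (fun y => f y - g y) x = laplacian f x - laplacian g x := by
  unfold laplacian
  rw [← Finset.sum_sub_distrib]
  exact Finset.sum_congr rfl fun i _ => iteratedFDeriv_two_sub' hf hg _

lemma dd_exp_line (c k A b : ℝ) :
    deriv (deriv (fun t : ℝ => c * Real.exp (k * t + A) + b)) 0
      = c * Real.exp A * k ^ 2 := by
  have h1 : ∀ t : ℝ, HasDerivAt (fun t : ℝ => c * Real.exp (k * t + A) + b)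
      (c * (Real.exp (k * t + A) * (k * 1))) t := fun t =>
    ((((hasDerivAt_id t).const_mul k).add_const A).exp.const_mul c).add_const b
  have h2 : deriv (fun t : ℝ => c * Real.exp (k * t + A) + b)
      = fun t : ℝ => (c * k) * Real.exp (k * t + A) := by
    funext t; rw [(h1 t).deriv]; ring
  rw [h2]
  have h3 : HasDerivAt (fun t : ℝ => (c * k) * Real.exp (k * t + A))
      ((c * k) * (Real.exp (k * 0 + A) * (k * 1))) 0 :=
    (((hasDerivAt_id 0).const_mul k).add_const A).exp.const_mul (c * k)
  rw [h3.deriv]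
  simp
  ring

lemma contDiff_expcoord {d : ℕ} (i0 : Fin d) (c α β b : ℝ) :
    ContDiff ℝ 2 (fun y : EuclideanSpace ℝ (Fin d) =>
      c * Real.exp (α * y i0 + β) + b) := by
  have hproj : ContDiff ℝ 2 (fun y : EuclideanSpace ℝ (Fin d) => y i0) :=
    (EuclideanSpace.proj (𝕜 := ℝ) (ι := Fin d) i0).contDiff (n := 2)
  exact ((contDiff_const.mul ((contDiff_const.mul hproj).add contDiff_const).exp)).add
    contDiff_const

lemma laplacian_expcoord {d : ℕ} (i0 : Fin d) (c α β b : ℝ)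
    (x : EuclideanSpace ℝ (Fin d)) :
    laplacian (fun y : EuclideanSpace ℝ (Fin d) => c * Real.exp (α * y i0 + β) + b) x
      = α ^ 2 * (c * Real.exp (α * x i0 + β)) := by
  unfold laplacian
  have key : ∀ i : Fin d,
      iteratedFDeriv ℝ 2 (fun y : EuclideanSpace ℝ (Fin d) =>
        c * Real.exp (α * y i0 + β) + b) x
        ![EuclideanSpace.single i (1:ℝ), EuclideanSpace.single i (1:ℝ)]
      = (if i = i0 then α ^ 2 * (c * Real.exp (α * x i0 + β)) else 0) := by
    intro i
    rw [line_dd (contDiff_expcoord i0 c α β b).contDiffAt]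
    have hline : (fun t : ℝ =>
        c * Real.exp (α * (x + t • EuclideanSpace.single i (1:ℝ)) i0 + β) + b)
        = fun t : ℝ => c * Real.exp ((α * (if i = i0 then (1:ℝ) else 0)) * t
            + (α * x i0 + β)) + b := by
      funext t
      have hc : (x + t • EuclideanSpace.single i (1:ℝ)) i0
          = x i0 + t * (if i = i0 then (1:ℝ) else 0) := by
        simp [EuclideanSpace.single_apply, eq_comm]
      rw [hc]; ring_nf
    rw [hline, dd_exp_line]
    by_cases h : i = i0 <;> simp [h] <;> ring
  rw [Finset.sum_congr rfl fun i _ => key i]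
  simp

lemma abs_coord_le {d : ℕ} (x : EuclideanSpace ℝ (Fin d)) (i : Fin d) : |x i| ≤ ‖x‖ := by
  rw [EuclideanSpace.norm_eq, ← Real.sqrt_sq_eq_abs]
  apply Real.sqrt_le_sqrt
  calc (x i) ^ 2 = ‖x i‖ ^ 2 := by rw [Real.norm_eq_abs, sq_abs]
  _ ≤ ∑ j, ‖x j‖ ^ 2 :=
      Finset.single_le_sum (f := fun j => ‖x j‖ ^ 2) (fun j _ => sq_nonneg _)
        (Finset.mem_univ i)

set_option maxHeartbeats 1000000 in
theorem stmt_12 (d : ℕ) (hd : 3 ≤ d)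
    (a : EuclideanSpace ℝ (Fin d)) (R : ℝ) (hR : 0 < R)
    (x₀ : EuclideanSpace ℝ (Fin d)) (hx₀ : x₀ ∈ Metric.ball a R)
    (φ : EuclideanSpace ℝ (Fin d) → ℝ → ℝ)
    (p : EuclideanSpace ℝ (Fin d) → ℝ)
    (hφ_cont : ContinuousOn (fun q : EuclideanSpace ℝ (Fin d) × ℝ => φ q.1 q.2)
      (Metric.closedBall a R ×ˢ univ))
    (hφ_nonneg : ∀ x ∈ Metric.closedBall a R, ∀ t, 0 ≤ φ x t)
    (hφ_mono : ∀ x ∈ Metric.closedBall a R, Monotone (φ x))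
    (hφ_zero : ∀ x ∈ Metric.closedBall a R, ∀ t ≤ (0 : ℝ), φ x t = 0)
    (hp_cont : ContinuousOn p (Metric.closedBall a R))
    (hp_nonneg : ∀ x ∈ Metric.closedBall a R, 0 ≤ p x)
    (hφ_growth : ∀ x ∈ Metric.closedBall a R, ∀ t, 0 ≤ t → φ x t ≤ p x * (t + 1)) :
    ∀ M > (0 : ℝ), ∃ lam₀ > (0 : ℝ), ∀ lam, lam₀ ≤ lam →
      ∀ u : EuclideanSpace ℝ (Fin d) → ℝ,
        ContinuousOn u (Metric.closedBall a R) →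
        ContDiffOn ℝ 2 u (Metric.ball a R) →
        (∀ x ∈ Metric.closedBall a R, 0 ≤ u x) →
        (∀ x ∈ Metric.ball a R, laplacian u x = φ x (u x)) →
        (∀ x ∈ Metric.sphere a R, u x = lam) →
        M ≤ u x₀ := by
  intro M hM
  have haK : a ∈ Metric.closedBall a R := Metric.mem_closedBall_self hR.le
  obtain ⟨z, hzK, hz⟩ := (isCompact_closedBall a R).exists_isMaxOn ⟨a, haK⟩ hp_cont
  set C := p z with hCdef
  have hC0 : 0 ≤ C := hp_nonneg z hzK
  have hpC : ∀ x ∈ Metric.closedBall a R, p x ≤ C := fun x hx => hz hx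
  set α := Real.sqrt (C + 1) with hαdef
  have hα0 : 0 < α := Real.sqrt_pos.2 (by linarith)
  have hα2 : α ^ 2 = C + 1 := Real.sq_sqrt (by linarith)
  have hd0 : 0 < d := by omega
  set i0 : Fin d := ⟨0, hd0⟩ with hi0
  -- coordinate bound
  have hcoord : ∀ y ∈ Metric.closedBall a R, |y i0 - a i0| ≤ R := by
    intro y hy
    have h2 : |(y - a) i0| ≤ ‖y - a‖ := abs_coord_le (y - a) i0
    rw [PiLp.sub_apply] at h2
    exact h2.trans (mem_closedBall_iff_norm.1 hy)
  refine ⟨(M + 1) * Real.exp (2 * α * R), by positivity, ?_⟩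
  intro lam hlam u hu_cont hu_C2 hu_nonneg hu_eq hu_bd
  have hlam0 : 0 < lam := lt_of_lt_of_le (by positivity) hlam
  set β : ℝ := -(α * a i0) - α * R with hβ
  set Ψ : EuclideanSpace ℝ (Fin d) → ℝ :=
    fun y => (lam + 1) * Real.exp (α * y i0 + β) + (-1) with hΨdef
  have hexp_le : ∀ y ∈ Metric.closedBall a R, α * y i0 + β ≤ 0 := by
    intro y hy
    have h3 : y i0 - a i0 - R ≤ 0 := by linarith [(abs_le.1 (hcoord y hy)).2]
    have h4 := mul_nonneg hα0.le (neg_nonneg.2 h3)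
    rw [hβ]; nlinarith
  set w : EuclideanSpace ℝ (Fin d) → ℝ := fun y => Ψ y - u y with hwdef
  have hΨC : Continuous Ψ := (contDiff_expcoord i0 (lam + 1) α β (-1)).continuous
  have key : ∀ y ∈ Metric.closedBall a R, w y ≤ 0 := by
    obtain ⟨xh, hxhK, hxhmax⟩ := (isCompact_closedBall a R).exists_isMaxOn ⟨a, haK⟩
      ((hΨC.continuousOn).sub hu_cont)
    intro y hy
    have hyxh : w y ≤ w xh := hxhmax hy
    have hwxh : w xh ≤ 0 := by
      by_contra hpos
      push_neg at hpos
      have hwval : w xh = (lam + 1) * Real.exp (α * xh i0 + β) + (-1) - u xh := rfl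
      have hsph : xh ∉ Metric.sphere a R := by
        intro hs
        have h1 : Real.exp (α * xh i0 + β) ≤ 1 :=
          Real.exp_le_one_iff.2 (hexp_le xh hxhK)
        have h2 : u xh = lam := hu_bd xh hs
        nlinarith
      have hball : xh ∈ Metric.ball a R := by
        have h' := hxhK
        rw [← Metric.ball_union_sphere] at h'
        rcases h' with h | h
        · exact h
        · exact absurd h hsph
      have hloc : IsLocalMax w xh :=
        hxhmax.isLocalMax (Filter.mem_of_superset (Metric.isOpen_ball.mem_nhds hball)
          Metric.ball_subset_closedBall)
      have huC2 : ContDiffAt ℝ 2 u xh := hu_C2.contDiffAt (Metric.isOpen_ball.mem_nhds hball)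
      have hΨC2 : ContDiffAt ℝ 2 Ψ xh := (contDiff_expcoord i0 (lam + 1) α β (-1)).contDiffAt
      have hwC2 : ContDiffAt ℝ 2 w xh := hΨC2.sub huC2
      have hlap_le : laplacian w xh ≤ 0 := by
        unfold laplacian
        apply Finset.sum_nonpos
        intro i _
        rw [line_dd hwC2]
        have hγ : ContDiff ℝ 2 (fun t : ℝ => xh + t • EuclideanSpace.single i (1:ℝ)) :=
          contDiff_const.add (contDiff_id.smul contDiff_const)
        have h0γ : xh + (0:ℝ) • EuclideanSpace.single i (1:ℝ) = xh := by simp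
        apply dd_nonpos_of_isLocalMax
        · have := ContDiffAt.comp (0:ℝ) (by rw [h0γ]; exact hwC2) hγ.contDiffAt
          exact this
        · have hten : Tendsto (fun t : ℝ => xh + t • EuclideanSpace.single i (1:ℝ))
              (𝓝 0) (𝓝 xh) := by
            have hc : Continuous fun t : ℝ => xh + t • EuclideanSpace.single i (1:ℝ) := by
              continuity
            simpa using hc.tendsto 0
          have hev := hten.eventually hloc
          unfold IsLocalMax IsMaxFilter
          filter_upwards [hev] with t ht
          show w (xh + t • EuclideanSpace.single i (1:ℝ))
            ≤ w (xh + (0:ℝ) • EuclideanSpace.single i (1:ℝ))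
          rw [h0γ]
          exact ht
      have hlapw : laplacian w xh
          = α ^ 2 * ((lam + 1) * Real.exp (α * xh i0 + β)) - φ xh (u xh) := by
        rw [hwdef, laplacian_sub hΨC2 huC2, hu_eq xh hball, hΨdef, laplacian_expcoord]
      have hgrow := hφ_growth xh hxhK (u xh) (hu_nonneg xh hxhK)
      have hpCx := hpC xh hxhK
      have hEpos : 0 < Real.exp (α * xh i0 + β) := Real.exp_pos _
      have hu1 : u xh + 1 < (lam + 1) * Real.exp (α * xh i0 + β) := by nlinarith
      have hφle : φ xh (u xh) ≤ C * (u xh + 1) := by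
        refine hgrow.trans ?_
        have := hu_nonneg xh hxhK
        nlinarith
      nlinarith [hu_nonneg xh hxhK, mul_le_mul_of_nonneg_left hu1.le hC0]
    linarith
  have hw0 := key x₀ (Metric.ball_subset_closedBall hx₀)
  have hw0val : w x₀ = (lam + 1) * Real.exp (α * x₀ i0 + β) + (-1) - u x₀ := rfl
  have hE0 : -(2 * α * R) ≤ α * x₀ i0 + β := by
    have h4 : -(2 * R) ≤ x₀ i0 - a i0 - R := by
      linarith [(abs_le.1 (hcoord x₀ (Metric.ball_subset_closedBall hx₀))).1]
    have h5 := mul_le_mul_of_nonneg_left h4 hα0.le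
    rw [hβ]; nlinarith
  have e1 : Real.exp (-(2 * α * R)) ≤ Real.exp (α * x₀ i0 + β) := Real.exp_le_exp.2 hE0
  have e2 : (M + 1) * Real.exp (2 * α * R) * Real.exp (-(2 * α * R)) = M + 1 := by
    rw [mul_assoc, ← Real.exp_add]; simp
  have e3 : M + 1 ≤ (lam + 1) * Real.exp (α * x₀ i0 + β) := by
    calc M + 1 = (M + 1) * Real.exp (2 * α * R) * Real.exp (-(2 * α * R)) := e2.symm
    _ ≤ lam * Real.exp (-(2 * α * R)) :=
        mul_le_mul_of_nonneg_right hlam (Real.exp_pos _).le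
    _ ≤ (lam + 1) * Real.exp (α * x₀ i0 + β) :=
        mul_le_mul (by linarith) e1 (Real.exp_pos _).le (by linarith)
  linarith
end

section
/- Let d ≥ 3 and let φ : ℝ^d × ℝ → [0,∞) be continuous such that for every x, t ↦ φ(x,t) is strictly increasing and concave on [0,∞) and φ(x,t) = 0 for all t ≤ 0. If there exists a nontrivial bounded nonnegative entire solution of Δu(x) = φ(x, u(x)) on ℝ^d, then there is no large entire solution, i.e. no nonnegative C² function u on ℝ^d with Δu(x) = φ(x, u(x)) for all x and u(x) → ∞ as ‖x‖ → ∞. -/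
open MeasureTheory Filter Set

/-- One-dimensional second derivative test: a `C²` function with a global max at `0`
has nonpositive second derivative there. -/
lemma sd_test {f : ℝ → ℝ} (hf : ContDiff ℝ 2 f) (hmax : ∀ t, f t ≤ f 0) :
    deriv (deriv f) 0 ≤ 0 := by
  by_contra h
  push_neg at h
  have hf2 : ContDiff ℝ (1+1) f := hf.of_le (by norm_num)
  have hf' : ContDiff ℝ 1 (deriv f) := ((contDiff_succ_iff_deriv (n := 1)).mp hf2).2.2
  have hdf : Differentiable ℝ f := hf.differentiable (by norm_num)
  have hdf' : Differentiable ℝ (deriv f) := hf'.differentiable (by norm_num)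
  have hf1 : ContDiff ℝ (0+1) (deriv f) := hf'.of_le (by norm_num)
  have hcont2 : Continuous (deriv (deriv f)) :=
    ((contDiff_succ_iff_deriv (n := 0)).mp hf1).2.2.continuous
  have hev : ∀ᶠ t in nhds (0:ℝ), 0 < deriv (deriv f) t :=
    (hcont2.continuousAt (x := 0)).eventually (eventually_gt_nhds h)
  obtain ⟨δ, hδpos, hδ⟩ := Metric.eventually_nhds_iff_ball.mp hev
  have hmono : StrictMonoOn (deriv f) (Metric.ball (0:ℝ) δ) := by
    apply strictMonoOn_of_deriv_pos (convex_ball 0 δ) hf'.continuous.continuousOn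
    intro t ht
    exact hδ t (by simpa [Metric.isOpen_ball.interior_eq] using ht)
  have hd0 : deriv f 0 = 0 := by
    have hmax' : IsMaxOn f Set.univ 0 := fun t _ => hmax t
    exact (hmax'.isLocalMax univ_mem).deriv_eq_zero
  have hpos : ∀ t, 0 < t → t < δ → 0 < deriv f t := by
    intro t ht0 htδ
    have := hmono (by simp [abs_of_pos, hδpos] : (0:ℝ) ∈ Metric.ball (0:ℝ) δ)
      (by simp [abs_of_pos ht0, htδ] : t ∈ Metric.ball (0:ℝ) δ) ht0
    rwa [hd0] at this
  have hmono2 : StrictMonoOn f (Icc 0 (δ/2)) := by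
    apply strictMonoOn_of_deriv_pos (convex_Icc _ _) hdf.continuous.continuousOn
    intro t ht
    rw [interior_Icc] at ht
    exact hpos t ht.1 (lt_of_lt_of_le ht.2 (by linarith))
  have : f 0 < f (δ/2) :=
    hmono2 (by constructor <;> linarith) (by constructor <;> linarith) (by linarith)
  exact absurd (hmax (δ/2)) (not_le.mpr this)

/-- The pure second directional derivative equals the second derivative of the
restriction to the line. -/
lemma line_sd {E : Type*} [NormedAddCommGroup E] [NormedSpace ℝ E] {g : E → ℝ}
    (hg : ContDiff ℝ 2 g) (x v : E) :
    deriv (deriv (fun t : ℝ => g (x + t • v))) 0 = iteratedFDeriv ℝ 2 g x ![v, v] := by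
  have hL : ∀ t : ℝ, HasDerivAt (fun s : ℝ => x + s • v) v t := fun t => by
    simpa using ((hasDerivAt_id t).smul_const v).const_add x
  have hdg : Differentiable ℝ g := hg.differentiable (by norm_num)
  have h1 : ∀ t : ℝ, HasDerivAt (fun s : ℝ => g (x + s • v)) (fderiv ℝ g (x + t • v) v) t :=
    fun t => ((hdg (x + t • v)).hasFDerivAt).comp_hasDerivAt t (hL t)
  have hderiv1 : deriv (fun s : ℝ => g (x + s • v)) = fun t : ℝ => fderiv ℝ g (x + t • v) v :=
    funext fun t => (h1 t).deriv
  have hF : Differentiable ℝ (fderiv ℝ g) :=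
    (hg.fderiv_right (m := 1) (by norm_num)).differentiable (by norm_num)
  have h2 : HasDerivAt (fun t : ℝ => fderiv ℝ g (x + t • v) v)
      (fderiv ℝ (fderiv ℝ g) x v v) 0 := by
    have hx : x + (0:ℝ) • v = x := by simp
    have hcomp := ((ContinuousLinearMap.apply ℝ ℝ v).hasFDerivAt.comp (x + (0:ℝ) • v)
      ((hF (x + (0:ℝ) • v)).hasFDerivAt)).comp_hasDerivAt 0 (hL 0)
    rw [hx] at hcomp
    exact hcomp
  rw [hderiv1, h2.deriv, iteratedFDeriv_two_apply]
  simp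

lemma line_contDiff {E : Type*} [NormedAddCommGroup E] [NormedSpace ℝ E] {g : E → ℝ}
    (hg : ContDiff ℝ 2 g) (x v : E) : ContDiff ℝ 2 (fun t : ℝ => g (x + t • v)) :=
  hg.comp (contDiff_const.add (contDiff_id.smul contDiff_const))

/-- At a global maximum of a `C²` function the Laplacian is nonpositive. -/
lemma laplacian_nonpos_at_max {d : ℕ} {g : EuclideanSpace ℝ (Fin d) → ℝ}
    (hg : ContDiff ℝ 2 g) {x0 : EuclideanSpace ℝ (Fin d)} (hmax : ∀ y, g y ≤ g x0) :
    laplacian g x0 ≤ 0 := by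
  apply Finset.sum_nonpos
  intro i _
  set v := EuclideanSpace.single i (1:ℝ)
  rw [← line_sd hg x0 v]
  apply sd_test (line_contDiff hg x0 v)
  intro t
  simpa using hmax (x0 + t • v)

/-- Linearity of the Laplacian for the combination `u - ε w`. -/
lemma laplacian_comb {d : ℕ} {u w : EuclideanSpace ℝ (Fin d) → ℝ}
    (hu : ContDiff ℝ 2 u) (hw : ContDiff ℝ 2 w) (ε : ℝ) (x : EuclideanSpace ℝ (Fin d)) :
    laplacian (fun y => u y - ε * w y) x = laplacian u x - ε * laplacian w x := by
  have hu' : ContDiff ℝ ((2:ℕ) : ℕ∞) u := by exact_mod_cast hu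
  have hw' : ContDiff ℝ ((2:ℕ) : ℕ∞) w := by exact_mod_cast hw
  have hw'' : ContDiff ℝ ((2:ℕ) : ℕ∞) ((-ε) • w) := hw'.const_smul (-ε)
  have heq : (fun y => u y - ε * w y) = u + (-ε) • w := by
    funext y; simp [smul_eq_mul]; ring
  have key : ∀ m : Fin 2 → EuclideanSpace ℝ (Fin d),
      iteratedFDeriv ℝ 2 (fun y => u y - ε * w y) x m
        = iteratedFDeriv ℝ 2 u x m - ε * iteratedFDeriv ℝ 2 w x m := by
    intro m
    have hu3 : ContDiffAt ℝ ((2:ℕ) : WithTop ℕ∞) u x := by exact_mod_cast hu.contDiffAt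
    have hw3 : ContDiffAt ℝ ((2:ℕ) : WithTop ℕ∞) w x := by exact_mod_cast hw.contDiffAt
    have hw4 : ContDiffAt ℝ ((2:ℕ) : WithTop ℕ∞) ((-ε) • w) x := hw3.const_smul (-ε)
    rw [heq, iteratedFDeriv_add_apply hu3 hw4, iteratedFDeriv_const_smul_apply hw3]
    simp [smul_eq_mul]; ring
  simp only [laplacian, key, Finset.sum_sub_distrib, Finset.mul_sum]

theorem stmt_15 (d : ℕ) (hd : 3 ≤ d)
    (φ : EuclideanSpace ℝ (Fin d) → ℝ → ℝ)
    (hφ_cont : Continuous (fun q : EuclideanSpace ℝ (Fin d) × ℝ => φ q.1 q.2))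
    (hφ_nonneg : ∀ x t, 0 ≤ φ x t)
    (hφ_mono : ∀ x, StrictMonoOn (φ x) (Ici 0))
    (hφ_conc : ∀ x, ConcaveOn ℝ (Ici 0) (φ x))
    (hφ_zero : ∀ x, ∀ t ≤ (0 : ℝ), φ x t = 0)
    (hbounded : ∃ u : EuclideanSpace ℝ (Fin d) → ℝ,
      ContDiff ℝ 2 u ∧ (∀ x, 0 ≤ u x) ∧
      (∀ x, laplacian u x = φ x (u x)) ∧
      (∃ M, ∀ x, u x ≤ M) ∧ u ≠ 0) :
    ¬ ∃ u : EuclideanSpace ℝ (Fin d) → ℝ,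
      ContDiff ℝ 2 u ∧ (∀ x, 0 ≤ u x) ∧
      (∀ x, laplacian u x = φ x (u x)) ∧
      Tendsto u (Bornology.cobounded (EuclideanSpace ℝ (Fin d))) atTop := by
  obtain ⟨u, hu2, hupos, hulap, ⟨M, hM⟩, hune⟩ := hbounded
  rintro ⟨w, hw2, hwpos, hwlap, hwtend⟩
  -- main step: u ≤ ε w for every ε ∈ (0,1]
  have main : ∀ ε : ℝ, 0 < ε → ε ≤ 1 → ∀ x, u x ≤ ε * w x := by
    intro ε hε hε1
    set g : EuclideanSpace ℝ (Fin d) → ℝ := fun y => u y - ε * w y with hg_def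
    have hgcont : Continuous g :=
      (hu2.continuous).sub (continuous_const.mul hw2.continuous)
    have hwtend' : Tendsto w (cocompact (EuclideanSpace ℝ (Fin d))) atTop := by
      rwa [← Metric.cobounded_eq_cocompact]
    have htend : Tendsto g (cocompact (EuclideanSpace ℝ (Fin d))) atBot := by
      have h1 : Tendsto (fun x => (-ε) * w x) (cocompact (EuclideanSpace ℝ (Fin d))) atBot :=
        hwtend'.const_mul_atTop_of_neg (by linarith)
      have h2 : Tendsto (fun x => M + (-ε) * w x) (cocompact (EuclideanSpace ℝ (Fin d))) atBot :=
        tendsto_atBot_add_const_left _ M h1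
      exact tendsto_atBot_mono (fun x => by
        have := hM x; simp only [hg_def]; linarith) h2
    obtain ⟨x0, hx0⟩ := hgcont.exists_forall_ge htend
    -- at the max, Laplacian of g is ≤ 0
    have hlap : laplacian g x0 ≤ 0 :=
      laplacian_nonpos_at_max ((hu2).sub (contDiff_const.mul hw2)) hx0
    have hlapeq : laplacian g x0 = φ x0 (u x0) - ε * φ x0 (w x0) := by
      rw [hg_def, laplacian_comb hu2 hw2, hulap, hwlap]
    -- concavity: ε φ(w x0) ≤ φ(ε w x0)
    have hconc : ε * φ x0 (w x0) ≤ φ x0 (ε * w x0) := by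
      have h := (hφ_conc x0).2 (mem_Ici.mpr (hwpos x0)) (mem_Ici.mpr le_rfl)
        (le_of_lt hε) (by linarith : (0:ℝ) ≤ 1 - ε) (by ring)
      have h0 : φ x0 0 = 0 := hφ_zero x0 0 le_rfl
      simpa [smul_eq_mul, h0] using h
    -- monotonicity: u x0 ≤ ε * w x0
    have hkey : u x0 ≤ ε * w x0 := by
      by_contra hc
      push_neg at hc
      have h1 : φ x0 (ε * w x0) < φ x0 (u x0) :=
        hφ_mono x0 (mem_Ici.mpr (mul_nonneg hε.le (hwpos x0))) (mem_Ici.mpr (hupos x0)) hc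
      have h2 : φ x0 (u x0) ≤ ε * φ x0 (w x0) := by linarith [hlapeq ▸ hlap]
      linarith
    intro x
    have := hx0 x
    simp only [hg_def] at this
    linarith
  -- conclude u ≡ 0
  apply hune
  funext x
  have hle : u x ≤ 0 := by
    by_contra hc
    push_neg at hc
    rcases le_or_gt (w x) 0 with hw0 | hw0
    · have := main 1 one_pos le_rfl x
      linarith
    · set ε := min 1 (u x / (2 * w x)) with hε_def
      have hεpos : 0 < ε := lt_min one_pos (by positivity)
      have hε1 : ε ≤ 1 := min_le_left _ _
      have := main ε hεpos hε1 x
      have h2 : ε * w x ≤ (u x / (2 * w x)) * w x :=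
        mul_le_mul_of_nonneg_right (min_le_right _ _) (le_of_lt hw0)
      have h3 : (u x / (2 * w x)) * w x = u x / 2 := by field_simp
      linarith
  exact le_antisymm hle (hupos x)
end

section
/- Let n ≥ 3 be an integer and Q > 0 a real number. For r > 0 define G(r) = ∫₀^∞ t^{−3/2} (1+r) (1 + (1+r)/t)^{(n−3)/2} exp(−Q²t/4 − Qr/2 − r²/(4t)) dt. Then there exist constants 0 < c ≤ C such that c·e^{−Qr} ≤ G(r) ≤ C·e^{−Qr} for all r ≥ 1. -/
open MeasureTheory Real Set

private lemma keyExp (Q r t : ℝ) (ht : t ≠ 0) :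
    -Q^2*t/4 - Q*r/2 - r^2/(4*t) = -(Q*r) + -((Q*t-r)^2/(4*t)) := by
  field_simp
  ring

private lemma pow_mul_exp_le (n : ℕ) (hn : 1 ≤ n) (x : ℝ) (hx : 0 ≤ x) :
    x ^ n * Real.exp (-(x/32)) ≤ (64*n)^n := by
  have hn' : (0:ℝ) < n := by exact_mod_cast hn
  have h1 : x ≤ 64*n * Real.exp (x/(64*n)) := by
    have h := Real.add_one_le_exp (x/(64*(n:ℝ)))
    have h2 : x/(64*(n:ℝ)) ≤ Real.exp (x/(64*(n:ℝ))) := by linarith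
    calc x = 64*(n:ℝ) * (x/(64*(n:ℝ))) := by field_simp
    _ ≤ 64*n * Real.exp (x/(64*n)) := by
        apply mul_le_mul_of_nonneg_left h2 (by positivity)
  calc x ^ n * Real.exp (-(x/32))
      ≤ (64*n * Real.exp (x/(64*n)))^n * Real.exp (-(x/32)) := by
        apply mul_le_mul_of_nonneg_right (pow_le_pow_left₀ hx h1 n) (Real.exp_pos _).le
    _ = (64*n)^n * Real.exp ((n:ℝ)*(x/(64*n))) * Real.exp (-(x/32)) := by
        rw [mul_pow, ← Real.exp_nat_mul]
    _ = (64*n)^n * Real.exp ((n:ℝ)*(x/(64*n)) + -(x/32)) := by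
        rw [mul_assoc, Real.exp_add]
    _ ≤ (64*n)^n * 1 := by
        apply mul_le_mul_of_nonneg_left _ (by positivity)
        rw [Real.exp_le_one_iff]
        have : (n:ℝ)*(x/(64*n)) = x/64 := by field_simp
        rw [this]; linarith
    _ = (64*n)^n := mul_one _

private lemma factor_le (n : ℕ) (hn : 3 ≤ n) {Q : ℝ} (hQ : 0 < Q) {r t : ℝ}
    (hr : 1 ≤ r) (ht : 0 < t) :
    (1 + (1+r)/t) ^ (((n:ℝ)-3)/2) * Real.exp (-((Q*t-r)^2/(8*t))) ≤
      (1+4*Q) ^ (((n:ℝ)-3)/2) + 3 ^ (((n:ℝ)-3)/2) + (192*(n:ℝ))^n := by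
  have hr0 : (0:ℝ) < r := lt_of_lt_of_le one_pos hr
  have hn3 : (3:ℝ) ≤ (n:ℝ) := by exact_mod_cast hn
  have hm0 : 0 ≤ ((n:ℝ)-3)/2 := by linarith
  have hbase0 : (0:ℝ) ≤ 1 + (1+r)/t := by positivity
  have hexp1 : Real.exp (-((Q*t-r)^2/(8*t))) ≤ 1 := by
    rw [Real.exp_le_one_iff]
    have : 0 ≤ (Q*t-r)^2/(8*t) := by positivity
    linarith
  have hQt : 0 ≤ (1+4*Q) ^ (((n:ℝ)-3)/2) := Real.rpow_nonneg (by positivity) _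
  have h3t : 0 ≤ (3:ℝ) ^ (((n:ℝ)-3)/2) := Real.rpow_nonneg (by norm_num) _
  have hNt : 0 ≤ (192*(n:ℝ))^n := by positivity
  rcases lt_or_ge t (min r (r/(2*Q))) with hlt | hge
  · -- small t
    have ht_r : t < r := hlt.trans_le (min_le_left _ _)
    have ht_q : t < r/(2*Q) := hlt.trans_le (min_le_right _ _)
    have hQt2 : 2*Q*t < r := by
      rw [lt_div_iff₀ (by positivity)] at ht_q; linarith [ht_q]
    set x := r^2/t with hxdef
    have hx0 : 0 < x := by positivity
    have hxr : r ≤ x := by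
      rw [hxdef, le_div_iff₀ ht]
      nlinarith
    have hx1 : 1 ≤ x := le_trans hr hxr
    have hb : 1 + (1+r)/t ≤ 3*x/r := by
      have e : 3*x/r = 3*r/t := by rw [hxdef]; field_simp
      rw [e, le_div_iff₀ ht, add_mul, div_mul_cancel₀ _ ht.ne']
      nlinarith
    have hb2 : 3*x/r ≤ 3*x := by
      apply div_le_self (by positivity) hr
    have hbx : (1 + (1+r)/t) ^ (((n:ℝ)-3)/2) ≤ (3*x) ^ (((n:ℝ)-3)/2) :=
      Real.rpow_le_rpow hbase0 (hb.trans hb2) hm0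
    have h4 : (3*x) ^ (((n:ℝ)-3)/2) ≤ (3*x) ^ ((n:ℝ)) := by
      apply Real.rpow_le_rpow_of_exponent_le (by linarith) (by linarith)
    have h5 : (3*x) ^ ((n:ℝ)) = (3*x)^n := Real.rpow_natCast _ n
    have hexp2 : Real.exp (-((Q*t-r)^2/(8*t))) ≤ Real.exp (-(x/32)) := by
      rw [Real.exp_le_exp, neg_le_neg_iff]
      have e1 : x/32 = r^2/(32*t) := by rw [hxdef]; ring
      rw [e1, div_le_div_iff₀ (by positivity) (by positivity)]
      have hA : 0 ≤ (r/2 - Q*t) * (3*r/2 - Q*t) :=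
        mul_nonneg (by linarith) (by linarith)
      nlinarith [mul_nonneg hA ht.le]
    calc (1 + (1+r)/t) ^ (((n:ℝ)-3)/2) * Real.exp (-((Q*t-r)^2/(8*t)))
        ≤ (3*x)^n * Real.exp (-(x/32)) := by
          rw [← h5]
          exact mul_le_mul (hbx.trans h4) hexp2 (Real.exp_pos _).le
            (Real.rpow_nonneg (by positivity) _)
      _ = 3^n * (x^n * Real.exp (-(x/32))) := by rw [mul_pow]; ring
      _ ≤ 3^n * (64*(n:ℝ))^n := by
          apply mul_le_mul_of_nonneg_left (pow_mul_exp_le n (by omega) x hx0.le)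
            (by positivity)
      _ = (192*(n:ℝ))^n := by rw [← mul_pow, show (3:ℝ)*(64*(n:ℝ)) = 192*(n:ℝ) by ring]
      _ ≤ (1+4*Q) ^ (((n:ℝ)-3)/2) + 3 ^ (((n:ℝ)-3)/2) + (192*(n:ℝ))^n := by
          linarith
  · rcases min_le_iff.mp hge with hc | hc
    · -- r ≤ t
      have hb : 1 + (1+r)/t ≤ 3 := by
        have : (1+r)/t ≤ 2 := by
          rw [div_le_iff₀ ht]; nlinarith
        linarith
      have : (1 + (1+r)/t) ^ (((n:ℝ)-3)/2) ≤ 3 ^ (((n:ℝ)-3)/2) :=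
        Real.rpow_le_rpow hbase0 hb hm0
      calc (1 + (1+r)/t) ^ (((n:ℝ)-3)/2) * Real.exp (-((Q*t-r)^2/(8*t)))
          ≤ 3 ^ (((n:ℝ)-3)/2) * 1 :=
            mul_le_mul this hexp1 (Real.exp_pos _).le h3t
        _ ≤ (1+4*Q) ^ (((n:ℝ)-3)/2) + 3 ^ (((n:ℝ)-3)/2) + (192*(n:ℝ))^n := by
            rw [mul_one]; linarith
    · -- r/(2Q) ≤ t
      have hb : 1 + (1+r)/t ≤ 1 + 4*Q := by
        have : (1+r)/t ≤ 4*Q := by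
          rw [div_le_iff₀ ht]
          rw [div_le_iff₀ (by positivity)] at hc
          nlinarith
        linarith
      have : (1 + (1+r)/t) ^ (((n:ℝ)-3)/2) ≤ (1+4*Q) ^ (((n:ℝ)-3)/2) :=
        Real.rpow_le_rpow hbase0 hb hm0
      calc (1 + (1+r)/t) ^ (((n:ℝ)-3)/2) * Real.exp (-((Q*t-r)^2/(8*t)))
          ≤ (1+4*Q) ^ (((n:ℝ)-3)/2) * 1 :=
            mul_le_mul this hexp1 (Real.exp_pos _).le hQt
        _ ≤ (1+4*Q) ^ (((n:ℝ)-3)/2) + 3 ^ (((n:ℝ)-3)/2) + (192*(n:ℝ))^n := by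
            rw [mul_one]; linarith

private lemma small_t_bound {c t : ℝ} (hc : 0 < c) (ht : 0 < t) :
    t ^ (-(3:ℝ)/2) * Real.exp (-(c/t)) ≤ 5 * c ^ (-(3:ℝ)/2) := by
  set s := c/t with hs
  have hs0 : 0 < s := by positivity
  have hts : t = c/s := by rw [hs]; field_simp
  have key : s ^ ((3:ℝ)/2) * Real.exp (-s) ≤ 5 := by
    have h1 : s ^ ((3:ℝ)/2) ≤ 5 * Real.exp s := by
      rcases le_or_gt s 1 with h | h
      · have : s ^ ((3:ℝ)/2) ≤ 1 := Real.rpow_le_one hs0.le h (by norm_num)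
        have := Real.one_le_exp (le_of_lt hs0)
        nlinarith [Real.exp_pos s]
      · have e1 : s ^ ((3:ℝ)/2) ≤ s ^ ((2:ℝ)) :=
          Real.rpow_le_rpow_of_exponent_le h.le (by norm_num)
        have e2 : s ^ ((2:ℝ)) = s^2 := by
          rw [show ((2:ℝ)) = ((2:ℕ):ℝ) by norm_num, Real.rpow_natCast]
        have e3 : s^2 ≤ 4 * Real.exp s := by
          have h4 := Real.add_one_le_exp (s/2)
          have h5 : Real.exp (s/2) * Real.exp (s/2) = Real.exp s := by
            rw [← Real.exp_add]; ring_nf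
          nlinarith [Real.exp_pos (s/2)]
        calc s ^ ((3:ℝ)/2) ≤ s^2 := by rw [← e2]; exact e1
          _ ≤ 4 * Real.exp s := e3
          _ ≤ 5 * Real.exp s := by nlinarith [Real.exp_pos s]
    calc s ^ ((3:ℝ)/2) * Real.exp (-s) ≤ 5 * Real.exp s * Real.exp (-s) := by
          apply mul_le_mul_of_nonneg_right h1 (Real.exp_pos _).le
      _ = 5 := by rw [mul_assoc, ← Real.exp_add]; simp
  have e0 : t ^ (-(3:ℝ)/2) = c ^ (-(3:ℝ)/2) * s ^ ((3:ℝ)/2) := by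
    rw [hts, Real.div_rpow hc.le hs0.le,
      show (-(3:ℝ)/2) = -((3:ℝ)/2) by norm_num, Real.rpow_neg hs0.le, div_eq_mul_inv, inv_inv]
  rw [e0]
  calc c ^ (-(3:ℝ)/2) * s ^ ((3:ℝ)/2) * Real.exp (-(c/t))
      = c ^ (-(3:ℝ)/2) * (s ^ ((3:ℝ)/2) * Real.exp (-s)) := by rw [← hs]; ring
    _ ≤ c ^ (-(3:ℝ)/2) * 5 := by
        apply mul_le_mul_of_nonneg_left key (Real.rpow_nonneg hc.le _)
    _ = 5 * c ^ (-(3:ℝ)/2) := by ring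

private lemma contF (n : ℕ) (Q r : ℝ) (hr : 0 ≤ r) :
    ContinuousOn (fun t : ℝ => t ^ (-(3:ℝ)/2) * (1+r) *
      (1 + (1+r)/t) ^ (((n:ℝ)-3)/2) *
      Real.exp (-Q^2*t/4 - Q*r/2 - r^2/(4*t))) (Ioi 0) := by
  intro t ht
  have ht0 : (0:ℝ) < t := ht
  apply ContinuousAt.continuousWithinAt
  have h1 : ContinuousAt (fun t:ℝ => t ^ (-(3:ℝ)/2)) t :=
    Real.continuousAt_rpow_const t _ (Or.inl (ne_of_gt ht0))
  have h2 : ContinuousAt (fun t:ℝ => 1 + (1+r)/t) t :=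
    continuousAt_const.add (continuousAt_const.div continuousAt_id (ne_of_gt ht0))
  have hb0 : (0:ℝ) < 1 + (1+r)/t := by positivity
  have h3 : ContinuousAt (fun t:ℝ => (1 + (1+r)/t) ^ (((n:ℝ)-3)/2)) t :=
    h2.rpow_const (Or.inl (ne_of_gt hb0))
  have h4 : ContinuousAt (fun t:ℝ => Real.exp (-Q^2*t/4 - Q*r/2 - r^2/(4*t))) t := by
    apply Real.continuous_exp.continuousAt.comp
    apply ContinuousAt.sub
    apply ContinuousAt.sub
    · exact ((continuousAt_const.mul continuousAt_id).div continuousAt_const (by norm_num))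
    · exact continuousAt_const
    · exact continuousAt_const.div (continuousAt_const.mul continuousAt_id)
        (by positivity)
  exact ((h1.mul continuousAt_const).mul h3).mul h4

private lemma contH (Q r : ℝ) :
    ContinuousOn (fun t : ℝ => t ^ (-(3:ℝ)/2) * Real.exp (-((Q*t-r)^2/(8*t)))) (Ioi 0) := by
  intro t ht
  have ht0 : (0:ℝ) < t := ht
  apply ContinuousAt.continuousWithinAt
  have h1 : ContinuousAt (fun t:ℝ => t ^ (-(3:ℝ)/2)) t :=
    Real.continuousAt_rpow_const t _ (Or.inl (ne_of_gt ht0))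
  have h4 : ContinuousAt (fun t:ℝ => Real.exp (-((Q*t-r)^2/(8*t)))) t := by
    apply Real.continuous_exp.continuousAt.comp
    apply ContinuousAt.neg
    apply ContinuousAt.div
    · exact ((continuousAt_const.mul continuousAt_id).sub continuousAt_const).pow 2
    · exact continuousAt_const.mul continuousAt_id
    · positivity
  exact h1.mul h4

private lemma rpow_neg32_anti {u v : ℝ} (hu : 0 < u) (huv : u ≤ v) :
    v ^ (-(3:ℝ)/2) ≤ u ^ (-(3:ℝ)/2) := by
  have hv : 0 < v := lt_of_lt_of_le hu huv
  rw [show (-(3:ℝ)/2) = -((3:ℝ)/2) by norm_num, Real.rpow_neg hu.le, Real.rpow_neg hv.le]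
  exact inv_anti₀ (Real.rpow_pos_of_pos hu _) (Real.rpow_le_rpow hu.le huv (by norm_num))

set_option maxHeartbeats 2000000 in
theorem stmt_16 (n : ℕ) (hn : 3 ≤ n) (Q : ℝ) (hQ : 0 < Q) :
    ∃ c C : ℝ, 0 < c ∧ c ≤ C ∧ ∀ r : ℝ, 1 ≤ r →
      c * Real.exp (-Q * r) ≤
        (∫ t in Ioi (0 : ℝ), t ^ (-(3 : ℝ) / 2) * (1 + r) *
          (1 + (1 + r) / t) ^ (((n : ℝ) - 3) / 2) *
          Real.exp (-Q ^ 2 * t / 4 - Q * r / 2 - r ^ 2 / (4 * t))) ∧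
      (∫ t in Ioi (0 : ℝ), t ^ (-(3 : ℝ) / 2) * (1 + r) *
          (1 + (1 + r) / t) ^ (((n : ℝ) - 3) / 2) *
          Real.exp (-Q ^ 2 * t / 4 - Q * r / 2 - r ^ 2 / (4 * t))) ≤
        C * Real.exp (-Q * r) := by
  have hn3 : (3:ℝ) ≤ (n:ℝ) := by exact_mod_cast hn
  have hm0 : 0 ≤ ((n:ℝ)-3)/2 := by linarith
  set M : ℝ := (1+4*Q) ^ (((n:ℝ)-3)/2) + 3 ^ (((n:ℝ)-3)/2) + (192*(n:ℝ))^n with hMdef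
  have hM0 : 0 < M := by
    have h1 : (0:ℝ) ≤ (1+4*Q) ^ (((n:ℝ)-3)/2) := Real.rpow_nonneg (by positivity) _
    have h2 : (0:ℝ) ≤ (3:ℝ) ^ (((n:ℝ)-3)/2) := Real.rpow_nonneg (by norm_num) _
    have h3 : (0:ℝ) < (192*(n:ℝ))^n := by positivity
    rw [hMdef]; linarith
  set a : ℝ := min 1 (1/(2*Q)) with hadef
  have ha0 : 0 < a := lt_min one_pos (by positivity)
  have ha1 : a ≤ 1 := min_le_left _ _
  have ha2 : a ≤ 1/(2*Q) := min_le_right _ _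
  set D1 : ℝ := 5 * 32 ^ ((3:ℝ)/2) with hD1def
  set D2 : ℝ := a ^ (-(3:ℝ)/2) * Real.sqrt (16*π/Q^3) with hD2def
  set D3 : ℝ := (2/Q) ^ (-(3:ℝ)/2) * (32/Q^2) with hD3def
  have hD1 : 0 ≤ D1 := by rw [hD1def]; positivity
  have hD2 : 0 ≤ D2 := by
    rw [hD2def]; exact mul_nonneg (Real.rpow_nonneg ha0.le _) (Real.sqrt_nonneg _)
  have hD3 : 0 ≤ D3 := by
    rw [hD3def]; exact mul_nonneg (Real.rpow_nonneg (by positivity) _) (by positivity)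
  set D : ℝ := D1 + D2 + D3 with hDdef
  have hD : 0 ≤ D := by rw [hDdef]; linarith
  set c0 : ℝ := (1+1/Q) ^ (-(3:ℝ)/2) * Real.exp (-(Q^3/4)) with hc0def
  have hc00 : 0 < c0 := by
    rw [hc0def]
    exact mul_pos (Real.rpow_pos_of_pos (by positivity) _) (Real.exp_pos _)
  refine ⟨c0, max (2*M*D) c0, hc00, le_max_right _ _, fun r hr => ?_⟩
  have hr0 : (0:ℝ) < r := lt_of_lt_of_le one_pos hr
  have hQrr : -Q * r = -(Q*r) := by ring
  rw [hQrr]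
  set F : ℝ → ℝ := fun t => t ^ (-(3 : ℝ) / 2) * (1 + r) *
      (1 + (1 + r) / t) ^ (((n : ℝ) - 3) / 2) *
      Real.exp (-Q ^ 2 * t / 4 - Q * r / 2 - r ^ 2 / (4 * t)) with hFdef
  set h : ℝ → ℝ := fun t => t ^ (-(3:ℝ)/2) * Real.exp (-((Q*t-r)^2/(8*t))) with hhdef
  have hh_nonneg : ∀ t : ℝ, 0 < t → 0 ≤ h t := fun t ht => by
    simp only [hhdef]
    exact mul_nonneg (Real.rpow_nonneg ht.le _) (Real.exp_pos _).le
  have hF_nonneg : ∀ t : ℝ, 0 < t → 0 ≤ F t := fun t ht => by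
    simp only [hFdef]
    have hb : (0:ℝ) ≤ 1 + (1+r)/t := by positivity
    exact mul_nonneg (mul_nonneg (mul_nonneg (Real.rpow_nonneg ht.le _)
      (by linarith)) (Real.rpow_nonneg hb _)) (Real.exp_pos _).le
  -- master pointwise bound
  have hFle : ∀ t ∈ Ioi (0:ℝ), F t ≤ ((1+r) * M * Real.exp (-(Q*r))) * h t := by
    intro t ht
    have ht0 : (0:ℝ) < t := ht
    have eexp : Real.exp (-Q^2*t/4 - Q*r/2 - r^2/(4*t)) =
        Real.exp (-(Q*r)) * (Real.exp (-((Q*t-r)^2/(8*t))) * Real.exp (-((Q*t-r)^2/(8*t)))) := by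
      rw [← Real.exp_add, ← Real.exp_add, keyExp Q r t ht0.ne']
      congr 1
      field_simp
      ring
    have e : F t = ((1+r) * Real.exp (-(Q*r))) *
        ((1 + (1+r)/t) ^ (((n:ℝ)-3)/2) * Real.exp (-((Q*t-r)^2/(8*t)))) * h t := by
      simp only [hFdef, hhdef]
      rw [eexp]
      ring
    rw [e]
    have hfac : (1 + (1+r)/t) ^ (((n:ℝ)-3)/2) * Real.exp (-((Q*t-r)^2/(8*t))) ≤ M := by
      rw [hMdef]; exact factor_le n hn hQ hr ht0
    calc ((1+r) * Real.exp (-(Q*r))) *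
        ((1 + (1+r)/t) ^ (((n:ℝ)-3)/2) * Real.exp (-((Q*t-r)^2/(8*t)))) * h t
        ≤ ((1+r) * Real.exp (-(Q*r))) * M * h t := by
          apply mul_le_mul_of_nonneg_right _ (hh_nonneg t ht0)
          exact mul_le_mul_of_nonneg_left hfac (by positivity)
      _ = ((1+r) * M * Real.exp (-(Q*r))) * h t := by ring
  -- splitting points
  set T : ℝ := min r (r/(2*Q)) with hTdef
  have hT0 : 0 < T := lt_min hr0 (by positivity)
  have hTr : T ≤ r := min_le_left _ _
  have hTq : T ≤ r/(2*Q) := min_le_right _ _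
  set B : ℝ := 2*r/Q with hBdef
  have hB0 : 0 < B := by rw [hBdef]; positivity
  have hTB : T < B := by
    apply lt_of_le_of_lt hTq
    rw [hBdef, div_lt_div_iff₀ (by positivity) (by positivity)]
    nlinarith
  have hra : r * a ≤ T := by
    rw [hTdef]
    apply le_min
    · calc r * a ≤ r * 1 := mul_le_mul_of_nonneg_left ha1 hr0.le
        _ = r := mul_one r
    · calc r * a ≤ r * (1/(2*Q)) := mul_le_mul_of_nonneg_left ha2 hr0.le
        _ = r / (2*Q) := by ring
  have hra0 : 0 < r * a := by positivity
  -- piece 1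
  have hsub1 : Ioc (0:ℝ) T ⊆ Ioi 0 := Ioc_subset_Ioi_self
  have hmeas1 : AEStronglyMeasurable h (volume.restrict (Ioc (0:ℝ) T)) := by
    have : ContinuousOn h (Ioc (0:ℝ) T) := by
      rw [hhdef]; exact (contH Q r).mono hsub1
    exact this.aestronglyMeasurable measurableSet_Ioc
  have bound1 : ∀ t ∈ Ioc (0:ℝ) T, h t ≤ D1 * (r^3)⁻¹ := by
    intro t ht
    obtain ⟨ht0, htT⟩ := ht
    have htq : t ≤ r/(2*Q) := le_trans htT hTq
    have hQt2 : 2*Q*t ≤ r := by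
      rw [le_div_iff₀ (by positivity)] at htq; nlinarith
    have hc : (0:ℝ) < r^2/32 := by positivity
    have hstep : h t ≤ t ^ (-(3:ℝ)/2) * Real.exp (-((r^2/32)/t)) := by
      simp only [hhdef]
      apply mul_le_mul_of_nonneg_left _ (Real.rpow_nonneg ht0.le _)
      rw [Real.exp_le_exp, neg_le_neg_iff, div_div,
        div_le_div_iff₀ (by positivity) (by positivity)]
      have hA : 0 ≤ (r/2 - Q*t) * (3*r/2 - Q*t) := mul_nonneg (by linarith) (by linarith)
      nlinarith [mul_nonneg hA ht0.le]
    apply le_trans (hstep.trans (small_t_bound hc ht0))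
    have e1 : (r^2/32 : ℝ) ^ (-(3:ℝ)/2) = 32 ^ ((3:ℝ)/2) * (r^3)⁻¹ := by
      rw [Real.div_rpow (by positivity) (by norm_num),
        show (-(3:ℝ)/2) = -((3:ℝ)/2) by norm_num,
        Real.rpow_neg (by positivity : (0:ℝ) ≤ r^2),
        Real.rpow_neg (by norm_num : (0:ℝ) ≤ (32:ℝ)), div_eq_mul_inv, inv_inv,
        ← Real.rpow_natCast r 2, ← Real.rpow_mul hr0.le,
        show ((2:ℕ):ℝ) * ((3:ℝ)/2) = ((3:ℕ):ℝ) by norm_num, Real.rpow_natCast]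
      ring
    rw [e1, hD1def]
    exact le_of_eq (by ring)
  have int1 : IntegrableOn h (Ioc (0:ℝ) T) := by
    apply Integrable.mono' (g := fun _ : ℝ => D1 * (r^3)⁻¹)
      (integrableOn_const measure_Ioc_lt_top.ne) hmeas1
    rw [ae_restrict_iff' measurableSet_Ioc]
    exact ae_of_all _ fun t ht => by
      rw [Real.norm_of_nonneg (hh_nonneg t ht.1)]
      exact bound1 t ht
  have est1 : (∫ t in Ioc (0:ℝ) T, h t) ≤ D1 * (1/r) := by
    have h1 : ‖∫ t in Ioc (0:ℝ) T, h t‖ ≤ (D1 * (r^3)⁻¹) * (volume (Ioc (0:ℝ) T)).toReal :=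
      norm_setIntegral_le_of_norm_le_const measure_Ioc_lt_top
        (fun t ht => by rw [Real.norm_of_nonneg (hh_nonneg t ht.1)]; exact bound1 t ht)
    have h2 : (volume (Ioc (0:ℝ) T)).toReal = T := by
      rw [Real.volume_Ioc, ENNReal.toReal_ofReal (by linarith : (0:ℝ) ≤ T - 0)]
      ring
    rw [Real.norm_eq_abs, h2] at h1
    have h3 : (∫ t in Ioc (0:ℝ) T, h t) ≤ (D1 * (r^3)⁻¹) * T :=
      le_trans (le_abs_self _) h1
    apply le_trans h3
    have e4 : D1 * (1/r) = (D1 * (r^3)⁻¹) * r^2 := by field_simp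
    rw [e4]
    apply mul_le_mul_of_nonneg_left _ (by positivity)
    nlinarith
  -- piece 2
  have hb2 : (0:ℝ) < Q^3/(16*r) := by positivity
  set b2 : ℝ := Q^3/(16*r) with hb2def
  set g2 : ℝ → ℝ := fun t => Real.exp (-b2 * (t - r/Q)^2) with hg2def
  have hg2int : Integrable g2 := by
    rw [hg2def]
    exact Integrable.comp_sub_right (integrable_exp_neg_mul_sq hb2) (r/Q)
  have hg2pos : ∀ t : ℝ, 0 ≤ g2 t := fun t => by
    simp only [hg2def]; exact (Real.exp_pos _).le
  have bound2 : ∀ t ∈ Ioc T B, h t ≤ T ^ (-(3:ℝ)/2) * g2 t := by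
    intro t ht
    obtain ⟨htT, htB⟩ := ht
    have ht0 : (0:ℝ) < t := lt_trans hT0 htT
    simp only [hhdef, hg2def]
    apply mul_le_mul (rpow_neg32_anti hT0 htT.le) _ (Real.exp_pos _).le
      (Real.rpow_nonneg hT0.le _)
    rw [show -b2 * (t - r/Q)^2 = -(b2 * (t - r/Q)^2) by ring, Real.exp_le_exp,
      neg_le_neg_iff]
    have e : (Q*t-r)^2 = Q^2*(t - r/Q)^2 := by field_simp
    have hbt : b2 * (8*t) ≤ Q^2 := by
      rw [hb2def]
      have hQtB : Q * t ≤ 2*r := by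
        rw [hBdef] at htB
        have := (le_div_iff₀ hQ).1 htB
        linarith
      rw [div_mul_eq_mul_div, div_le_iff₀ (by positivity)]
      nlinarith
    rw [e, le_div_iff₀ (by positivity)]
    nlinarith [sq_nonneg (t - r/Q), mul_nonneg (mul_nonneg hb2.le (sq_nonneg (t - r/Q))) ht0.le]
  have hsub2 : Ioc T B ⊆ Ioi (0:ℝ) := fun x hx => lt_trans hT0 hx.1
  have hmeas2 : AEStronglyMeasurable h (volume.restrict (Ioc T B)) := by
    have : ContinuousOn h (Ioc T B) := by
      rw [hhdef]; exact (contH Q r).mono hsub2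
    exact this.aestronglyMeasurable measurableSet_Ioc
  have int2 : IntegrableOn h (Ioc T B) := by
    apply Integrable.mono' ((hg2int.const_mul (T ^ (-(3:ℝ)/2))).integrableOn) hmeas2
    rw [ae_restrict_iff' measurableSet_Ioc]
    exact ae_of_all _ fun t ht => by
      rw [Real.norm_of_nonneg (hh_nonneg t (lt_trans hT0 ht.1))]
      exact bound2 t ht
  have est2 : (∫ t in Ioc T B, h t) ≤ D2 * (1/r) := by
    have step1 : (∫ t in Ioc T B, h t) ≤ ∫ t in Ioc T B, T ^ (-(3:ℝ)/2) * g2 t :=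
      setIntegral_mono_on int2 ((hg2int.const_mul _).integrableOn) measurableSet_Ioc bound2
    have step2 : (∫ t in Ioc T B, T ^ (-(3:ℝ)/2) * g2 t)
        = T ^ (-(3:ℝ)/2) * ∫ t in Ioc T B, g2 t := integral_const_mul _ _
    have step3 : (∫ t in Ioc T B, g2 t) ≤ ∫ t, g2 t :=
      setIntegral_le_integral hg2int (ae_of_all _ hg2pos)
    have step4 : (∫ t, g2 t) = Real.sqrt (π / b2) := by
      rw [hg2def]
      rw [integral_sub_right_eq_self (μ := volume) (fun x : ℝ => Real.exp (-b2 * x ^ 2)) (r/Q)]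
      exact integral_gaussian b2
    have step5 : (∫ t in Ioc T B, h t) ≤ T ^ (-(3:ℝ)/2) * Real.sqrt (π / b2) := by
      rw [← step4]
      apply le_trans step1
      rw [step2]
      exact mul_le_mul_of_nonneg_left step3 (Real.rpow_nonneg hT0.le _)
    apply le_trans step5
    have step6 : T ^ (-(3:ℝ)/2) ≤ (r*a) ^ (-(3:ℝ)/2) := rpow_neg32_anti hra0 hra
    have e5 : (r*a) ^ (-(3:ℝ)/2) * Real.sqrt (π / b2) = D2 * (1/r) := by
      rw [Real.mul_rpow hr0.le ha0.le,
        show π / b2 = (16*π/Q^3) * r by rw [hb2def]; field_simp,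
        Real.sqrt_mul (by positivity) r, Real.sqrt_eq_rpow r, hD2def]
      have er : r ^ (-(3:ℝ)/2) * r ^ ((1:ℝ)/2) = 1/r := by
        rw [← Real.rpow_add hr0, show (-(3:ℝ)/2 + (1:ℝ)/2) = -1 by norm_num,
          Real.rpow_neg_one, inv_eq_one_div]
      calc r ^ (-(3:ℝ)/2) * a ^ (-(3:ℝ)/2) * (Real.sqrt (16*π/Q^3) * r ^ ((1:ℝ)/2))
          = a ^ (-(3:ℝ)/2) * Real.sqrt (16*π/Q^3) * (r ^ (-(3:ℝ)/2) * r ^ ((1:ℝ)/2)) := by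
            rw [show ((1:ℝ)/2) = (1/2 : ℝ) by norm_num]; ring
        _ = a ^ (-(3:ℝ)/2) * Real.sqrt (16*π/Q^3) * (1/r) := by rw [er]
    rw [← e5]
    exact mul_le_mul_of_nonneg_right step6 (Real.sqrt_nonneg _)
  -- piece 3
  have hcc : (0:ℝ) < Q^2/32 := by positivity
  set cc : ℝ := Q^2/32 with hccdef
  set g3 : ℝ → ℝ := fun t => Real.exp (-cc * t) with hg3def
  have hg3int : IntegrableOn g3 (Ioi B) := by
    rw [hg3def]; exact exp_neg_integrableOn_Ioi B hcc
  have bound3 : ∀ t ∈ Ioi B, h t ≤ B ^ (-(3:ℝ)/2) * g3 t := by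
    intro t ht
    have htB : B ≤ t := (le_of_lt ht)
    have ht0 : (0:ℝ) < t := lt_trans hB0 ht
    simp only [hhdef, hg3def]
    apply mul_le_mul (rpow_neg32_anti hB0 htB) _ (Real.exp_pos _).le
      (Real.rpow_nonneg hB0.le _)
    rw [show -cc * t = -(cc * t) by ring, Real.exp_le_exp, neg_le_neg_iff,
      le_div_iff₀ (by positivity)]
    have h2r : 2*r ≤ Q*t := by
      rw [hBdef] at htB
      have := (div_le_iff₀ hQ).1 htB
      linarith
    have hA : 0 ≤ (Q*t/2 - r) * (3*(Q*t)/2 - r) := mul_nonneg (by linarith) (by linarith)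
    rw [hccdef]
    nlinarith [hA]
  have hsub3 : Ioi B ⊆ Ioi (0:ℝ) := Ioi_subset_Ioi hB0.le
  have hmeas3 : AEStronglyMeasurable h (volume.restrict (Ioi B)) := by
    have : ContinuousOn h (Ioi B) := by
      rw [hhdef]; exact (contH Q r).mono hsub3
    exact this.aestronglyMeasurable measurableSet_Ioi
  have int3 : IntegrableOn h (Ioi B) := by
    apply Integrable.mono' (hg3int.const_mul (B ^ (-(3:ℝ)/2))) hmeas3
    rw [ae_restrict_iff' measurableSet_Ioi]
    exact ae_of_all _ fun t ht => by
      rw [Real.norm_of_nonneg (hh_nonneg t (lt_trans hB0 ht))]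
      exact bound3 t ht
  have est3 : (∫ t in Ioi B, h t) ≤ D3 * (1/r) := by
    have step1 : (∫ t in Ioi B, h t) ≤ ∫ t in Ioi B, B ^ (-(3:ℝ)/2) * g3 t :=
      setIntegral_mono_on int3 (hg3int.const_mul _) measurableSet_Ioi bound3
    have step2 : (∫ t in Ioi B, B ^ (-(3:ℝ)/2) * g3 t)
        = B ^ (-(3:ℝ)/2) * ∫ t in Ioi B, g3 t := integral_const_mul _ _
    have step3 : (∫ t in Ioi B, g3 t) = cc⁻¹ * Real.exp (-(cc*B)) := by
      simp only [hg3def]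
      have := integral_comp_mul_left_Ioi (fun y : ℝ => Real.exp (-y)) B hcc
      simp only [smul_eq_mul] at this
      rw [show (fun t : ℝ => Real.exp (-cc * t)) = fun t : ℝ => Real.exp (-(cc * t)) by
          funext t; rw [neg_mul]]
      rw [this, integral_exp_neg_Ioi]
    have step4 : (∫ t in Ioi B, g3 t) ≤ cc⁻¹ := by
      rw [step3]
      calc cc⁻¹ * Real.exp (-(cc*B)) ≤ cc⁻¹ * 1 := by
            apply mul_le_mul_of_nonneg_left _ (by positivity)
            rw [Real.exp_le_one_iff]
            have : 0 ≤ cc * B := by positivity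
            linarith
        _ = cc⁻¹ := mul_one _
    have step5 : (∫ t in Ioi B, h t) ≤ B ^ (-(3:ℝ)/2) * cc⁻¹ := by
      apply le_trans step1
      rw [step2]
      exact mul_le_mul_of_nonneg_left step4 (Real.rpow_nonneg hB0.le _)
    apply le_trans step5
    have e6 : B ^ (-(3:ℝ)/2) = (2/Q) ^ (-(3:ℝ)/2) * r ^ (-(3:ℝ)/2) := by
      rw [show B = (2/Q) * r by rw [hBdef]; ring, Real.mul_rpow (by positivity) hr0.le]
    have e7 : r ^ (-(3:ℝ)/2) ≤ 1/r := by
      have : r ^ (-(3:ℝ)/2) ≤ r ^ (-1:ℝ) :=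
        Real.rpow_le_rpow_of_exponent_le hr (by norm_num)
      rwa [Real.rpow_neg_one, inv_eq_one_div] at this
    have e8 : cc⁻¹ = 32/Q^2 := by rw [hccdef, inv_div]
    rw [e6, e8, hD3def]
    calc (2/Q) ^ (-(3:ℝ)/2) * r ^ (-(3:ℝ)/2) * (32/Q^2)
        ≤ (2/Q) ^ (-(3:ℝ)/2) * (1/r) * (32/Q^2) := by
          apply mul_le_mul_of_nonneg_right _ (by positivity)
          exact mul_le_mul_of_nonneg_left e7 (Real.rpow_nonneg (by positivity) _)
      _ = (2/Q) ^ (-(3:ℝ)/2) * (32/Q^2) * (1/r) := by ring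
  -- combine pieces
  have hu1 : Ioc T B ∪ Ioi B = Ioi T := Ioc_union_Ioi_eq_Ioi hTB.le
  have hu2 : Ioc (0:ℝ) T ∪ Ioi T = Ioi (0:ℝ) := Ioc_union_Ioi_eq_Ioi hT0.le
  have intT : IntegrableOn h (Ioi T) := by rw [← hu1]; exact int2.union int3
  have hint : IntegrableOn h (Ioi (0:ℝ)) := by rw [← hu2]; exact int1.union intT
  have hsplit : (∫ t in Ioi (0:ℝ), h t) ≤ D * (1/r) := by
    have s2 : (∫ t in Ioi T, h t) = (∫ t in Ioc T B, h t) + ∫ t in Ioi B, h t := by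
      rw [← hu1, setIntegral_union (Ioc_disjoint_Ioi le_rfl) measurableSet_Ioi int2 int3]
    have s1 : (∫ t in Ioi (0:ℝ), h t) = (∫ t in Ioc (0:ℝ) T, h t) + ∫ t in Ioi T, h t := by
      rw [← hu2, setIntegral_union (Ioc_disjoint_Ioi le_rfl) measurableSet_Ioi int1 intT]
    rw [s1, s2, hDdef]
    have : (D1 + D2 + D3) * (1/r) = D1 * (1/r) + D2 * (1/r) + D3 * (1/r) := by ring
    rw [this]
    linarith
  -- integrability of F
  have hFcont : ContinuousOn F (Ioi (0:ℝ)) := by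
    rw [hFdef]; exact contF n Q r (by linarith)
  have hFmeas : AEStronglyMeasurable F (volume.restrict (Ioi (0:ℝ))) :=
    hFcont.aestronglyMeasurable measurableSet_Ioi
  have hFint : IntegrableOn F (Ioi (0:ℝ)) := by
    apply Integrable.mono' (hint.const_mul ((1+r) * M * Real.exp (-(Q*r)))) hFmeas
    rw [ae_restrict_iff' measurableSet_Ioi]
    exact ae_of_all _ fun t ht => by
      rw [Real.norm_of_nonneg (hF_nonneg t ht)]
      exact hFle t ht
  constructor
  · -- lower bound
    set J : Set ℝ := Icc (r/Q) (r/Q + Real.sqrt r) with hJdef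
    have hJsub : J ⊆ Ioi (0:ℝ) := fun x hx =>
      lt_of_lt_of_le (by positivity) hx.1
    have low_pt : ∀ t ∈ J, ((1+1/Q)*r) ^ (-(3:ℝ)/2) *
        ((1+r) * (Real.exp (-(Q*r)) * Real.exp (-(Q^3/4)))) ≤ F t := by
      intro t ht
      obtain ⟨ht1, ht2⟩ := ht
      have ht0 : (0:ℝ) < t := lt_of_lt_of_le (by positivity) ht1
      have hQt_r : r ≤ Q*t := by
        rw [div_le_iff₀ hQ] at ht1
        linarith
      have hQtub : Q*t - r ≤ Q*Real.sqrt r := by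
        have h1 : Q*(r/Q + Real.sqrt r) = r + Q*Real.sqrt r := by
          field_simp
        have h2 := mul_le_mul_of_nonneg_left ht2 hQ.le
        rw [h1] at h2
        linarith
      have hsq : (Q*t - r)^2 ≤ Q^2*r := by
        have h0 : 0 ≤ Q*t - r := by linarith
        have h1 : (Q*t-r)^2 ≤ (Q*Real.sqrt r)^2 := by
          apply sq_le_sq' _ hQtub
          nlinarith [Real.sqrt_nonneg r, hQ]
        calc (Q*t-r)^2 ≤ (Q*Real.sqrt r)^2 := h1
          _ = Q^2 * (Real.sqrt r)^2 := by ring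
          _ = Q^2 * r := by rw [Real.sq_sqrt hr0.le]
      have hquot : (Q*t-r)^2/(4*t) ≤ Q^3/4 := by
        have h4t : 4*(r/Q) ≤ 4*t := by
          have : r/Q ≤ t := ht1
          linarith
        calc (Q*t-r)^2/(4*t) ≤ Q^2*r/(4*(r/Q)) :=
            div_le_div₀ (by positivity) hsq (by positivity) h4t
          _ = Q^3/4 := by field_simp
      have hexplow : Real.exp (-(Q*r)) * Real.exp (-(Q^3/4)) ≤
          Real.exp (-Q^2*t/4 - Q*r/2 - r^2/(4*t)) := by
        rw [keyExp Q r t ht0.ne', Real.exp_add]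
        apply mul_le_mul_of_nonneg_left _ (Real.exp_pos _).le
        rw [Real.exp_le_exp, neg_le_neg_iff]
        exact hquot
      have htub : t ≤ (1+1/Q)*r := by
        have hsr : Real.sqrt r ≤ r := by
          have h1 : Real.sqrt r ≤ Real.sqrt (r^2) := Real.sqrt_le_sqrt (by nlinarith)
          rwa [Real.sqrt_sq hr0.le] at h1
        calc t ≤ r/Q + Real.sqrt r := ht2
          _ ≤ r/Q + r := by linarith
          _ = (1+1/Q)*r := by field_simp; ring
      have hrpow : ((1+1/Q)*r) ^ (-(3:ℝ)/2) ≤ t ^ (-(3:ℝ)/2) := rpow_neg32_anti ht0 htub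
      have hbase1 : (1:ℝ) ≤ (1 + (1+r)/t) ^ (((n:ℝ)-3)/2) := by
        apply Real.one_le_rpow _ hm0
        have : 0 ≤ (1+r)/t := by positivity
        linarith
      have hFt : F t = t ^ (-(3:ℝ)/2) * (1+r) * (1 + (1+r)/t) ^ (((n:ℝ)-3)/2) *
          Real.exp (-Q^2*t/4 - Q*r/2 - r^2/(4*t)) := by
        simp only [hFdef]
      rw [hFt]
      calc ((1+1/Q)*r) ^ (-(3:ℝ)/2) * ((1+r) * (Real.exp (-(Q*r)) * Real.exp (-(Q^3/4))))
          = (((1+1/Q)*r) ^ (-(3:ℝ)/2) * (1+r)) *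
            (1 * (Real.exp (-(Q*r)) * Real.exp (-(Q^3/4)))) := by ring
        _ ≤ (t ^ (-(3:ℝ)/2) * (1+r)) * ((1 + (1+r)/t) ^ (((n:ℝ)-3)/2) *
            Real.exp (-Q^2*t/4 - Q*r/2 - r^2/(4*t))) := by
            apply mul_le_mul
            · exact mul_le_mul_of_nonneg_right hrpow (by linarith)
            · exact mul_le_mul hbase1 hexplow (by positivity)
                (le_trans zero_le_one hbase1)
            · positivity
            · exact mul_nonneg (Real.rpow_nonneg ht0.le _) (by linarith)
        _ = t ^ (-(3:ℝ)/2) * (1+r) * (1 + (1+r)/t) ^ (((n:ℝ)-3)/2) *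
            Real.exp (-Q^2*t/4 - Q*r/2 - r^2/(4*t)) := by ring
    have hvolJ : (volume J).toReal = Real.sqrt r := by
      rw [hJdef, Real.volume_Icc,
        show r/Q + Real.sqrt r - r/Q = Real.sqrt r by ring,
        ENNReal.toReal_ofReal (Real.sqrt_nonneg r)]
    have hlow1 : (((1+1/Q)*r) ^ (-(3:ℝ)/2) *
        ((1+r) * (Real.exp (-(Q*r)) * Real.exp (-(Q^3/4))))) * (volume J).toReal
        ≤ ∫ t in J, F t := by
      apply setIntegral_ge_of_const_le_real measurableSet_Icc
        measure_Icc_lt_top.ne low_pt (hFint.mono_set hJsub)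
    have hmono : (∫ t in J, F t) ≤ ∫ t in Ioi (0:ℝ), F t := by
      apply setIntegral_mono_set hFint
      · filter_upwards [ae_restrict_mem measurableSet_Ioi] with t ht using hF_nonneg t ht
      · exact HasSubset.Subset.eventuallyLE hJsub
    have e4 : (((1+1/Q)*r) ^ (-(3:ℝ)/2) *
        ((1+r) * (Real.exp (-(Q*r)) * Real.exp (-(Q^3/4))))) * Real.sqrt r
        = (c0 * Real.exp (-(Q*r))) * ((1+r) * (1/r)) := by
      have er : r ^ (-(3:ℝ)/2) * r ^ ((1:ℝ)/2) = 1/r := by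
        rw [← Real.rpow_add hr0, show (-(3:ℝ)/2 + (1:ℝ)/2) = -1 by norm_num,
          Real.rpow_neg_one, inv_eq_one_div]
      rw [hc0def, Real.sqrt_eq_rpow, Real.mul_rpow (by positivity : (0:ℝ) ≤ 1+1/Q) hr0.le,
        ← er]
      ring
    have h5 : (1:ℝ) ≤ (1+r) * (1/r) := by
      rw [mul_one_div, le_div_iff₀ hr0]
      linarith
    calc c0 * Real.exp (-(Q*r))
        = c0 * Real.exp (-(Q*r)) * 1 := by ring
      _ ≤ c0 * Real.exp (-(Q*r)) * ((1+r)*(1/r)) := by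
          apply mul_le_mul_of_nonneg_left h5 (by positivity)
      _ = (((1+1/Q)*r) ^ (-(3:ℝ)/2) *
          ((1+r) * (Real.exp (-(Q*r)) * Real.exp (-(Q^3/4))))) * Real.sqrt r := by
          rw [e4]
      _ ≤ ∫ t in J, F t := by rw [← hvolJ]; exact hlow1
      _ ≤ ∫ t in Ioi (0:ℝ), F t := hmono
  · -- upper bound
    calc ∫ t in Ioi (0:ℝ), F t
        ≤ ∫ t in Ioi (0:ℝ), ((1+r) * M * Real.exp (-(Q*r))) * h t :=
          setIntegral_mono_on hFint (hint.const_mul _) measurableSet_Ioi hFle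
      _ = ((1+r) * M * Real.exp (-(Q*r))) * ∫ t in Ioi (0:ℝ), h t := integral_const_mul _ _
      _ ≤ ((1+r) * M * Real.exp (-(Q*r))) * (D * (1/r)) := by
          apply mul_le_mul_of_nonneg_left hsplit (by positivity)
      _ ≤ (2*M*D) * Real.exp (-(Q*r)) := by
          have h1 : (1+r) * (1/r) ≤ 2 := by
            rw [mul_one_div, div_le_iff₀ hr0]
            linarith
          calc ((1+r) * M * Real.exp (-(Q*r))) * (D * (1/r))
              = ((1+r) * (1/r)) * (M * D * Real.exp (-(Q*r))) := by ring
            _ ≤ 2 * (M * D * Real.exp (-(Q*r))) := by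
                apply mul_le_mul_of_nonneg_right h1 (by positivity)
            _ = (2*M*D) * Real.exp (-(Q*r)) := by ring
      _ ≤ max (2*M*D) c0 * Real.exp (-(Q*r)) := by
          apply mul_le_mul_of_nonneg_right (le_max_left _ _) (Real.exp_pos _).le
end

section
/- Let n ≥ 3 be an integer and Q > 0 a real number. For r > 0 define G(r) = ∫₀^∞ t^{−3/2} (1+r) (1 + (1+r)/t)^{(n−3)/2} exp(−Q²t/4 − Qr/2 − r²/(4t)) dt. Then there exist constants 0 < c ≤ C such that c·r^{2−n} ≤ G(r) ≤ C·r^{2−n} for all 0 < r ≤ 1. -/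
open MeasureTheory Real Set

namespace Stmt17Aux

noncomputable def F (n : ℕ) (Q r t : ℝ) : ℝ :=
  t ^ (-(3 : ℝ) / 2) * (1 + r) * (1 + (1 + r) / t) ^ (((n : ℝ) - 3) / 2) *
    Real.exp (-Q ^ 2 * t / 4 - Q * r / 2 - r ^ 2 / (4 * t))

variable {n : ℕ} {Q r : ℝ}

lemma nu_nonneg (hn : 3 ≤ n) : 0 ≤ ((n : ℝ) - 3) / 2 := by
  have : (3 : ℝ) ≤ n := by exact_mod_cast hn
  linarith

lemma F_nonneg (hr : 0 ≤ r) {t : ℝ} (ht : 0 < t) : 0 ≤ F n Q r t := by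
  unfold F
  have h1 : (0 : ℝ) ≤ 1 + (1 + r) / t := by positivity
  have h2 : (0 : ℝ) ≤ t := ht.le
  positivity

lemma F_contOn (hr : 0 ≤ r) : ContinuousOn (F n Q r) (Ioi 0) := by
  have h1 : ContinuousOn (fun t : ℝ => t ^ (-(3 : ℝ) / 2)) (Ioi 0) :=
    fun t ht => (Real.continuousAt_rpow_const t _ (Or.inl (ne_of_gt ht))).continuousWithinAt
  have h2 : ContinuousOn (fun t : ℝ => (1 + (1 + r) / t) ^ (((n : ℝ) - 3) / 2)) (Ioi 0) := by
    apply ContinuousOn.rpow_const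
    · exact continuousOn_const.add (continuousOn_const.div continuousOn_id
        fun t ht => ne_of_gt ht)
    · intro t ht
      left
      have : (0 : ℝ) < 1 + (1 + r) / t := by
        have := (mem_Ioi.mp ht)
        positivity
      exact ne_of_gt this
  have h3 : ContinuousOn (fun t : ℝ => Real.exp (-Q ^ 2 * t / 4 - Q * r / 2 - r ^ 2 / (4 * t)))
      (Ioi 0) := by
    apply Real.continuous_exp.comp_continuousOn
    apply ContinuousOn.sub
    · exact (((continuousOn_const.mul continuousOn_id).div_const 4).sub continuousOn_const)
    · apply continuousOn_const.div (continuousOn_const.mul continuousOn_id)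
      intro t ht
      have := mem_Ioi.mp ht
      exact mul_ne_zero (by norm_num) (ne_of_gt this)
  exact ((h1.mul continuousOn_const).mul h2).mul h3

/-- common bound for `t ∈ (0,1]` -/
lemma UB01 (hn : 3 ≤ n) (hQ : 0 < Q) (hr : 0 < r) (hr1 : r ≤ 1) {t : ℝ}
    (ht0 : 0 < t) (ht1 : t ≤ 1) :
    F n Q r t ≤ 2 * 3 ^ (((n : ℝ) - 3) / 2) * t ^ (-(3 : ℝ) / 2 - ((n : ℝ) - 3) / 2) *
      Real.exp (-(r ^ 2 / (4 * t))) := by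
  have hν := nu_nonneg hn
  have e1 : t ^ (-(3 : ℝ) / 2) * (1 + r) ≤ t ^ (-(3 : ℝ) / 2) * 2 :=
    mul_le_mul_of_nonneg_left (by linarith) (Real.rpow_nonneg ht0.le _)
  have e2 : (1 + (1 + r) / t) ^ (((n : ℝ) - 3) / 2) ≤
      3 ^ (((n : ℝ) - 3) / 2) * t ^ (-(((n : ℝ) - 3) / 2)) := by
    have hbase : 1 + (1 + r) / t ≤ 3 / t := by
      rw [le_div_iff₀ ht0]
      have h : (1 + (1 + r) / t) * t = t + (1 + r) := by field_simp
      rw [h]; linarith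
    calc (1 + (1 + r) / t) ^ (((n : ℝ) - 3) / 2) ≤ (3 / t) ^ (((n : ℝ) - 3) / 2) :=
          Real.rpow_le_rpow (by positivity) hbase hν
      _ = 3 ^ (((n : ℝ) - 3) / 2) * t ^ (-(((n : ℝ) - 3) / 2)) := by
          rw [Real.div_rpow (by norm_num) ht0.le, Real.rpow_neg ht0.le, div_eq_mul_inv]
  have e3 : Real.exp (-Q ^ 2 * t / 4 - Q * r / 2 - r ^ 2 / (4 * t)) ≤
      Real.exp (-(r ^ 2 / (4 * t))) := by
    apply Real.exp_le_exp.2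
    nlinarith [sq_nonneg Q, hQ.le, hr.le, ht0.le, mul_nonneg (mul_nonneg (sq_nonneg Q) ht0.le) (by norm_num : (0:ℝ) ≤ 1), mul_nonneg hQ.le hr.le]
  have key : F n Q r t ≤ (t ^ (-(3 : ℝ) / 2) * 2) * (3 ^ (((n : ℝ) - 3) / 2) *
      t ^ (-(((n : ℝ) - 3) / 2))) * Real.exp (-(r ^ 2 / (4 * t))) := by
    unfold F
    have hb : (0 : ℝ) ≤ 1 + (1 + r) / t := by positivity
    apply mul_le_mul _ e3 (Real.exp_pos _).le (by positivity)
    apply mul_le_mul e1 e2 (Real.rpow_nonneg hb _) (by positivity)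
  refine key.trans_eq ?_
  have h1 : t ^ (-(3 : ℝ) / 2) * t ^ (-(((n : ℝ) - 3) / 2)) =
      t ^ (-(3 : ℝ) / 2 - ((n : ℝ) - 3) / 2) := by
    rw [← Real.rpow_add ht0]; ring_nf
  calc (t ^ (-(3 : ℝ) / 2) * 2) * (3 ^ (((n : ℝ) - 3) / 2) * t ^ (-(((n : ℝ) - 3) / 2))) *
        Real.exp (-(r ^ 2 / (4 * t)))
      = 2 * 3 ^ (((n : ℝ) - 3) / 2) * (t ^ (-(3 : ℝ) / 2) * t ^ (-(((n : ℝ) - 3) / 2))) *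
        Real.exp (-(r ^ 2 / (4 * t))) := by ring
    _ = _ := by rw [h1]

lemma UB_small (hn : 3 ≤ n) (hQ : 0 < Q) (hr : 0 < r) (hr1 : r ≤ 1) {t : ℝ}
    (ht : t ∈ Ioc 0 (r ^ 2)) :
    F n Q r t ≤ (2 * 3 ^ (((n : ℝ) - 3) / 2) * n.factorial * 4 ^ n) / r ^ (2 * n) *
      t ^ ((n : ℝ) / 2) := by
  obtain ⟨ht0, ht1⟩ := ht
  have ht1' : t ≤ 1 := ht1.trans (by nlinarith)
  have hx : (0 : ℝ) < r ^ 2 / (4 * t) := by positivity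
  have hexp : Real.exp (-(r ^ 2 / (4 * t))) ≤ (n.factorial : ℝ) * (4 * t) ^ n / r ^ (2 * n) := by
    have hb := Real.pow_div_factorial_le_exp (x := r ^ 2 / (4 * t)) hx.le n
    have hbpos : (0 : ℝ) < (r ^ 2 / (4 * t)) ^ n / n.factorial := by positivity
    rw [Real.exp_neg]
    calc (Real.exp (r ^ 2 / (4 * t)))⁻¹ ≤ ((r ^ 2 / (4 * t)) ^ n / n.factorial)⁻¹ := by
          apply inv_anti₀ hbpos hb
      _ = (n.factorial : ℝ) * (4 * t) ^ n / r ^ (2 * n) := by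
          rw [div_pow, pow_mul]
          field_simp
  have h1 := UB01 hn hQ hr hr1 ht0 ht1'
  have hc : (0 : ℝ) ≤ 2 * 3 ^ (((n : ℝ) - 3) / 2) * t ^ (-(3 : ℝ) / 2 - ((n : ℝ) - 3) / 2) := by
    positivity
  calc F n Q r t ≤ 2 * 3 ^ (((n : ℝ) - 3) / 2) * t ^ (-(3 : ℝ) / 2 - ((n : ℝ) - 3) / 2) *
        ((n.factorial : ℝ) * (4 * t) ^ n / r ^ (2 * n)) :=
        h1.trans (mul_le_mul_of_nonneg_left hexp hc)
    _ = (2 * 3 ^ (((n : ℝ) - 3) / 2) * n.factorial * 4 ^ n) / r ^ (2 * n) *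
        (t ^ (-(3 : ℝ) / 2 - ((n : ℝ) - 3) / 2) * t ^ ((n : ℝ))) := by
        rw [mul_pow, ← Real.rpow_natCast t n]; ring
    _ = _ := by
        congr 1
        rw [← Real.rpow_add ht0]
        congr 1
        ring

lemma UB_mid (hn : 3 ≤ n) (hQ : 0 < Q) (hr : 0 < r) (hr1 : r ≤ 1) {t : ℝ}
    (ht : t ∈ Ioc (r ^ 2) 1) :
    F n Q r t ≤ 2 * 3 ^ (((n : ℝ) - 3) / 2) * t ^ (-((n : ℝ) / 2)) := by
  obtain ⟨ht0', ht1⟩ := ht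
  have ht0 : 0 < t := lt_trans (by positivity) ht0'
  have h1 := UB01 hn hQ hr hr1 ht0 ht1
  have hexp : Real.exp (-(r ^ 2 / (4 * t))) ≤ 1 := by
    apply Real.exp_le_one_iff.2
    have : (0:ℝ) ≤ r ^ 2 / (4 * t) := by positivity
    linarith
  have heq : -(3 : ℝ) / 2 - ((n : ℝ) - 3) / 2 = -((n : ℝ) / 2) := by ring
  calc F n Q r t ≤ 2 * 3 ^ (((n : ℝ) - 3) / 2) * t ^ (-(3 : ℝ) / 2 - ((n : ℝ) - 3) / 2) * 1 :=
        h1.trans (mul_le_mul_of_nonneg_left hexp (by positivity))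
    _ = 2 * 3 ^ (((n : ℝ) - 3) / 2) * t ^ (-((n : ℝ) / 2)) := by rw [heq]; ring

lemma UB_big (hn : 3 ≤ n) (hQ : 0 < Q) (hr : 0 < r) (hr1 : r ≤ 1) {t : ℝ}
    (ht : t ∈ Ioi (1 : ℝ)) :
    F n Q r t ≤ 2 * 3 ^ (((n : ℝ) - 3) / 2) * t ^ (-(3 : ℝ) / 2) := by
  have ht1 : (1 : ℝ) ≤ t := le_of_lt ht
  have ht0 : (0 : ℝ) < t := lt_of_lt_of_le one_pos ht1
  have hν := nu_nonneg hn
  have e1 : t ^ (-(3 : ℝ) / 2) * (1 + r) ≤ t ^ (-(3 : ℝ) / 2) * 2 :=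
    mul_le_mul_of_nonneg_left (by linarith) (Real.rpow_nonneg ht0.le _)
  have e2 : (1 + (1 + r) / t) ^ (((n : ℝ) - 3) / 2) ≤ 3 ^ (((n : ℝ) - 3) / 2) := by
    apply Real.rpow_le_rpow (by positivity) _ hν
    have : (1 + r) / t ≤ 2 := by
      rw [div_le_iff₀ ht0]; nlinarith
    linarith
  have e3 : Real.exp (-Q ^ 2 * t / 4 - Q * r / 2 - r ^ 2 / (4 * t)) ≤ 1 := by
    apply Real.exp_le_one_iff.2
    have h1 : (0:ℝ) ≤ Q ^ 2 * t / 4 := by positivity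
    have h2 : (0:ℝ) ≤ Q * r / 2 := by positivity
    have h3 : (0:ℝ) ≤ r ^ 2 / (4 * t) := by positivity
    nlinarith
  have hb : (0 : ℝ) ≤ 1 + (1 + r) / t := by positivity
  calc F n Q r t ≤ (t ^ (-(3 : ℝ) / 2) * 2) * 3 ^ (((n : ℝ) - 3) / 2) * 1 := by
        unfold F
        apply mul_le_mul _ e3 (Real.exp_pos _).le (by positivity)
        apply mul_le_mul e1 e2 (Real.rpow_nonneg hb _) (by positivity)
    _ = 2 * 3 ^ (((n : ℝ) - 3) / 2) * t ^ (-(3 : ℝ) / 2) := by ring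


lemma intOn_small (hn : 3 ≤ n) (hQ : 0 < Q) (hr : 0 < r) (hr1 : r ≤ 1) :
    IntegrableOn (F n Q r) (Ioc 0 (r ^ 2)) := by
  have hg : IntegrableOn (fun t : ℝ => t ^ ((n : ℝ) / 2)) (Ioc 0 (r ^ 2)) := by
    rw [← intervalIntegrable_iff_integrableOn_Ioc_of_le (by positivity)]
    exact intervalIntegral.intervalIntegrable_rpow' (by have : (0:ℝ) ≤ n := Nat.cast_nonneg n; linarith)
  apply Integrable.mono'
    (hg.const_mul ((2 * 3 ^ (((n : ℝ) - 3) / 2) * n.factorial * 4 ^ n) / r ^ (2 * n)))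
  · exact ((F_contOn hr.le).mono (Ioc_subset_Ioi_self.trans (by
      intro x hx; exact hx))).aestronglyMeasurable measurableSet_Ioc
  · refine (ae_restrict_iff' measurableSet_Ioc).2 (ae_of_all _ fun t ht => ?_)
    rw [Real.norm_eq_abs, abs_of_nonneg (F_nonneg hr.le ht.1)]
    exact UB_small hn hQ hr hr1 ht

lemma intOn_mid (hn : 3 ≤ n) (hQ : 0 < Q) (hr : 0 < r) (hr1 : r ≤ 1) :
    IntegrableOn (F n Q r) (Ioc (r ^ 2) 1) := by
  have hg : IntegrableOn (fun t : ℝ => t ^ (-((n : ℝ) / 2))) (Ioc (r ^ 2) 1) := by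
    apply IntegrableOn.mono_set _ Ioc_subset_Icc_self
    apply ContinuousOn.integrableOn_Icc
    intro t ht
    have ht0 : (0 : ℝ) < t := lt_of_lt_of_le (by positivity) ht.1
    exact (Real.continuousAt_rpow_const t _ (Or.inl (ne_of_gt ht0))).continuousWithinAt
  apply Integrable.mono' (hg.const_mul (2 * 3 ^ (((n : ℝ) - 3) / 2)))
  · apply ((F_contOn hr.le).mono _).aestronglyMeasurable measurableSet_Ioc
    intro x hx
    exact lt_trans (by positivity) hx.1
  · refine (ae_restrict_iff' measurableSet_Ioc).2 (ae_of_all _ fun t ht => ?_)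
    have ht0 : (0 : ℝ) < t := lt_trans (by positivity) ht.1
    rw [Real.norm_eq_abs, abs_of_nonneg (F_nonneg hr.le ht0)]
    exact UB_mid hn hQ hr hr1 ht

lemma intOn_big (hn : 3 ≤ n) (hQ : 0 < Q) (hr : 0 < r) (hr1 : r ≤ 1) :
    IntegrableOn (F n Q r) (Ioi 1) := by
  have hg : IntegrableOn (fun t : ℝ => t ^ (-(3 : ℝ) / 2)) (Ioi 1) := by
    have := integrableOn_Ioi_rpow_of_lt (show (-(3:ℝ)/2) < -1 by norm_num) one_pos
    exact this
  apply Integrable.mono' (hg.const_mul (2 * 3 ^ (((n : ℝ) - 3) / 2)))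
  · apply ((F_contOn hr.le).mono _).aestronglyMeasurable measurableSet_Ioi
    intro x hx
    exact lt_trans one_pos (mem_Ioi.mp hx)
  · refine (ae_restrict_iff' measurableSet_Ioi).2 (ae_of_all _ fun t ht => ?_)
    have ht0 : (0 : ℝ) < t := lt_trans one_pos ht
    rw [Real.norm_eq_abs, abs_of_nonneg (F_nonneg hr.le ht0)]
    exact UB_big hn hQ hr hr1 ht

lemma split_Ioi (hr : 0 < r) (hr1 : r ≤ 1) :
    Ioc (0:ℝ) (r ^ 2) ∪ Ioc (r ^ 2) 1 ∪ Ioi 1 = Ioi (0:ℝ) := by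
  have h1 : r ^ 2 ≤ 1 := by nlinarith
  rw [Ioc_union_Ioc_eq_Ioc (by positivity) h1, Ioc_union_Ioi_eq_Ioi zero_le_one]

lemma intOn_Ioi (hn : 3 ≤ n) (hQ : 0 < Q) (hr : 0 < r) (hr1 : r ≤ 1) :
    IntegrableOn (F n Q r) (Ioi 0) := by
  rw [← split_Ioi hr hr1]
  exact ((intOn_small hn hQ hr hr1).union (intOn_mid hn hQ hr hr1)).union (intOn_big hn hQ hr hr1)

lemma integral_split (hn : 3 ≤ n) (hQ : 0 < Q) (hr : 0 < r) (hr1 : r ≤ 1) :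
    ∫ t in Ioi (0:ℝ), F n Q r t =
      (∫ t in Ioc (0:ℝ) (r ^ 2), F n Q r t) + (∫ t in Ioc (r ^ 2) 1, F n Q r t) +
      (∫ t in Ioi (1:ℝ), F n Q r t) := by
  rw [← split_Ioi hr hr1]
  rw [setIntegral_union _ measurableSet_Ioi
      ((intOn_small hn hQ hr hr1).union (intOn_mid hn hQ hr hr1)) (intOn_big hn hQ hr hr1),
    setIntegral_union (Ioc_disjoint_Ioc_of_le le_rfl) measurableSet_Ioc (intOn_small hn hQ hr hr1)
      (intOn_mid hn hQ hr hr1)]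
  · have h1 : r ^ 2 ≤ 1 := by nlinarith
    rw [Ioc_union_Ioc_eq_Ioc (by positivity) h1]
    exact Ioc_disjoint_Ioi_same


lemma rpow_sq (hr : 0 < r) (q : ℝ) : ((r ^ 2 : ℝ)) ^ q = r ^ (2 * q) := by
  rw [← Real.rpow_natCast r 2, ← Real.rpow_mul hr.le]
  norm_num

lemma up_small (hn : 3 ≤ n) (hQ : 0 < Q) (hr : 0 < r) (hr1 : r ≤ 1) :
    ∫ t in Ioc (0:ℝ) (r ^ 2), F n Q r t ≤
      (2 * 3 ^ (((n : ℝ) - 3) / 2) * n.factorial * 4 ^ n) / ((n : ℝ) / 2 + 1) *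
        r ^ ((2:ℝ) - n) := by
  have hn' : (3:ℝ) ≤ n := by exact_mod_cast hn
  have hg : IntegrableOn (fun t : ℝ => t ^ ((n : ℝ) / 2)) (Ioc 0 (r ^ 2)) := by
    rw [← intervalIntegrable_iff_integrableOn_Ioc_of_le (by positivity)]
    exact intervalIntegral.intervalIntegrable_rpow' (by linarith)
  set A : ℝ := (2 * 3 ^ (((n : ℝ) - 3) / 2) * n.factorial * 4 ^ n) / r ^ (2 * n) with hA
  have h1 : ∫ t in Ioc (0:ℝ) (r ^ 2), F n Q r t ≤
      ∫ t in Ioc (0:ℝ) (r ^ 2), A * t ^ ((n : ℝ) / 2) :=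
    setIntegral_mono_on (intOn_small hn hQ hr hr1) (hg.const_mul A) measurableSet_Ioc
      (fun t ht => UB_small hn hQ hr hr1 ht)
  have h2 : ∫ t in Ioc (0:ℝ) (r ^ 2), A * t ^ ((n : ℝ) / 2) =
      A * ((r ^ 2 : ℝ) ^ ((n : ℝ) / 2 + 1) / ((n : ℝ) / 2 + 1)) := by
    rw [MeasureTheory.integral_const_mul, ← intervalIntegral.integral_of_le (by positivity),
      integral_rpow (Or.inl (by linarith))]
    rw [Real.zero_rpow (by linarith)]
    ring
  have h3 : A * ((r ^ 2 : ℝ) ^ ((n : ℝ) / 2 + 1) / ((n : ℝ) / 2 + 1)) =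
      (2 * 3 ^ (((n : ℝ) - 3) / 2) * n.factorial * 4 ^ n) / ((n : ℝ) / 2 + 1) *
        r ^ ((2:ℝ) - n) := by
    have key : (r ^ 2 : ℝ) ^ ((n : ℝ) / 2 + 1) = r ^ (2 * n) * r ^ ((2:ℝ) - n) := by
      rw [rpow_sq hr, ← Real.rpow_natCast r (2 * n), ← Real.rpow_add hr]
      congr 1
      push_cast
      ring
    rw [hA, key]
    have hrn : (r : ℝ) ^ (2 * n) ≠ 0 := pow_ne_zero _ hr.ne'
    field_simp
  calc ∫ t in Ioc (0:ℝ) (r ^ 2), F n Q r t ≤ _ := h1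
    _ = _ := h2
    _ = _ := h3

lemma up_mid (hn : 3 ≤ n) (hQ : 0 < Q) (hr : 0 < r) (hr1 : r ≤ 1) :
    ∫ t in Ioc (r ^ 2) 1, F n Q r t ≤
      2 * 3 ^ (((n : ℝ) - 3) / 2) / ((n : ℝ) / 2 - 1) * r ^ ((2:ℝ) - n) := by
  have hn' : (3:ℝ) ≤ n := by exact_mod_cast hn
  have h2r : (0:ℝ) < r ^ 2 := by positivity
  have hr21 : r ^ 2 ≤ 1 := by nlinarith
  set K : ℝ := 2 * 3 ^ (((n : ℝ) - 3) / 2) with hK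
  have hKpos : 0 < K := by rw [hK]; positivity
  have hg : IntegrableOn (fun t : ℝ => t ^ (-((n : ℝ) / 2))) (Ioc (r ^ 2) 1) := by
    apply IntegrableOn.mono_set _ Ioc_subset_Icc_self
    apply ContinuousOn.integrableOn_Icc
    intro t ht
    have ht0 : (0 : ℝ) < t := lt_of_lt_of_le h2r ht.1
    exact (Real.continuousAt_rpow_const t _ (Or.inl (ne_of_gt ht0))).continuousWithinAt
  have h1 : ∫ t in Ioc (r ^ 2) 1, F n Q r t ≤
      ∫ t in Ioc (r ^ 2) 1, K * t ^ (-((n : ℝ) / 2)) :=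
    setIntegral_mono_on (intOn_mid hn hQ hr hr1) (hg.const_mul K) measurableSet_Ioc
      (fun t ht => UB_mid hn hQ hr hr1 ht)
  have hnot : (0:ℝ) ∉ Set.uIcc (r ^ 2) 1 := by
    intro h
    rcases Set.mem_uIcc.mp h with ⟨h1', h2'⟩ | ⟨h1', h2'⟩ <;> nlinarith
  have h2 : ∫ t in Ioc (r ^ 2) 1, K * t ^ (-((n : ℝ) / 2)) =
      K * ((1 - (r ^ 2 : ℝ) ^ (-((n : ℝ) / 2) + 1)) / (-((n : ℝ) / 2) + 1)) := by
    rw [MeasureTheory.integral_const_mul, ← intervalIntegral.integral_of_le hr21,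
      integral_rpow (Or.inr ⟨by intro h; rw [neg_eq_iff_eq_neg] at h; norm_num at h; linarith, hnot⟩)]
    rw [Real.one_rpow]
  have hX : (r ^ 2 : ℝ) ^ (-((n : ℝ) / 2) + 1) = r ^ ((2:ℝ) - n) := by
    rw [rpow_sq hr]
    congr 1
    ring
  have h3 : K * ((1 - (r ^ 2 : ℝ) ^ (-((n : ℝ) / 2) + 1)) / (-((n : ℝ) / 2) + 1)) ≤
      K / ((n : ℝ) / 2 - 1) * r ^ ((2:ℝ) - n) := by
    rw [hX]
    set X : ℝ := r ^ ((2:ℝ) - n) with hXdef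
    have hXpos : 0 < X := Real.rpow_pos_of_pos hr _
    have hd : (0:ℝ) < (n : ℝ) / 2 - 1 := by linarith
    have he : (1 - X) / (-((n : ℝ) / 2) + 1) = (X - 1) / ((n : ℝ) / 2 - 1) := by
      rw [div_eq_div_iff (by linarith) (by linarith)]
      ring
    rw [he]
    rw [div_mul_eq_mul_div, mul_div_assoc]
    apply mul_le_mul_of_nonneg_left _ hKpos.le
    gcongr
    linarith
  exact h1.trans (h2.le.trans h3)


lemma up_big (hn : 3 ≤ n) (hQ : 0 < Q) (hr : 0 < r) (hr1 : r ≤ 1) :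
    ∫ t in Ioi (1:ℝ), F n Q r t ≤
      2 * 3 ^ (((n : ℝ) - 3) / 2) * 2 * r ^ ((2:ℝ) - n) := by
  have hn' : (3:ℝ) ≤ n := by exact_mod_cast hn
  set K : ℝ := 2 * 3 ^ (((n : ℝ) - 3) / 2) with hK
  have hKpos : 0 < K := by rw [hK]; positivity
  have hg : IntegrableOn (fun t : ℝ => t ^ (-(3:ℝ) / 2)) (Ioi 1) :=
    integrableOn_Ioi_rpow_of_lt (by norm_num) one_pos
  have h1 : ∫ t in Ioi (1:ℝ), F n Q r t ≤ ∫ t in Ioi (1:ℝ), K * t ^ (-(3:ℝ) / 2) :=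
    setIntegral_mono_on (intOn_big hn hQ hr hr1) (hg.const_mul K) measurableSet_Ioi
      (fun t ht => UB_big hn hQ hr hr1 ht)
  have h2 : ∫ t in Ioi (1:ℝ), K * t ^ (-(3:ℝ) / 2) = K * 2 := by
    rw [MeasureTheory.integral_const_mul,
      integral_Ioi_rpow_of_lt (by norm_num : (-(3:ℝ)/2) < -1) one_pos]
    norm_num
  have h3 : K * 2 ≤ K * 2 * r ^ ((2:ℝ) - n) := by
    apply le_mul_of_one_le_right (by positivity)
    exact Real.one_le_rpow_of_pos_of_le_one_of_nonpos hr hr1 (by linarith)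
  exact h1.trans (h2.le.trans h3)

lemma upper (hn : 3 ≤ n) (hQ : 0 < Q) (hr : 0 < r) (hr1 : r ≤ 1) :
    ∫ t in Ioi (0:ℝ), F n Q r t ≤
      ((2 * 3 ^ (((n : ℝ) - 3) / 2) * n.factorial * 4 ^ n) / ((n : ℝ) / 2 + 1) +
        2 * 3 ^ (((n : ℝ) - 3) / 2) / ((n : ℝ) / 2 - 1) +
        2 * 3 ^ (((n : ℝ) - 3) / 2) * 2) * r ^ ((2:ℝ) - n) := by
  rw [integral_split hn hQ hr hr1, add_mul, add_mul]
  exact add_le_add (add_le_add (up_small hn hQ hr hr1) (up_mid hn hQ hr hr1))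
    (up_big hn hQ hr hr1)

lemma lower (hn : 3 ≤ n) (hQ : 0 < Q) (hr : 0 < r) (hr1 : r ≤ 1) :
    2 ^ (-(3:ℝ)/2) * 2 ^ (-(((n : ℝ) - 3) / 2)) * Real.exp (-(Q ^ 2 / 2 + Q / 2 + 1 / 4)) *
      r ^ ((2:ℝ) - n) ≤ ∫ t in Ioi (0:ℝ), F n Q r t := by
  have hν := nu_nonneg hn
  have h2r : (0:ℝ) < r ^ 2 := by positivity
  have hsub : Ioc (r ^ 2) (2 * r ^ 2) ⊆ Ioi (0:ℝ) := fun t ht => lt_trans h2r ht.1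
  set cL : ℝ := 2 ^ (-(3:ℝ)/2) * 2 ^ (-(((n : ℝ) - 3) / 2)) *
    Real.exp (-(Q ^ 2 / 2 + Q / 2 + 1 / 4)) with hcL
  have hpt : ∀ t ∈ Ioc (r ^ 2) (2 * r ^ 2), cL * r ^ (-(n:ℝ)) ≤ F n Q r t := by
    intro t ht
    obtain ⟨ht1, ht2⟩ := ht
    have ht0 : (0:ℝ) < t := lt_trans h2r ht1
    have h2r2 : (0:ℝ) < 2 * r ^ 2 := by positivity
    have a1 : (2 * r ^ 2 : ℝ) ^ (-(3:ℝ)/2) ≤ t ^ (-(3:ℝ)/2) :=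
      Real.rpow_le_rpow_of_nonpos ht0 ht2 (by norm_num)
    have b1 : (1 / (2 * r ^ 2) : ℝ) ^ (((n : ℝ) - 3) / 2) ≤
        (1 + (1 + r) / t) ^ (((n : ℝ) - 3) / 2) := by
      apply Real.rpow_le_rpow (by positivity) _ hν
      have e1 : 1 / (2 * r ^ 2) ≤ 1 / t := one_div_le_one_div_of_le ht0 ht2
      have e2 : 1 / t ≤ (1 + r) / t := by gcongr <;> linarith
      have e3 : (0:ℝ) ≤ (1 + r) / t := by positivity
      linarith
    have c1 : Real.exp (-(Q ^ 2 / 2 + Q / 2 + 1 / 4)) ≤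
        Real.exp (-Q ^ 2 * t / 4 - Q * r / 2 - r ^ 2 / (4 * t)) := by
      apply Real.exp_le_exp.2
      have hd : r ^ 2 / (4 * t) ≤ 1 / 4 := by
        rw [div_le_div_iff₀ (by positivity) (by norm_num)]
        linarith
      have hr2le : r ^ 2 ≤ 1 := by nlinarith
      have ht2' : t ≤ 2 := by nlinarith
      have e4 : Q ^ 2 * t / 4 ≤ Q ^ 2 / 2 := by nlinarith [sq_nonneg Q]
      have e5 : Q * r / 2 ≤ Q / 2 := by nlinarith
      linarith
    have key : (2 * r ^ 2 : ℝ) ^ (-(3:ℝ)/2) * 1 *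
        ((1 / (2 * r ^ 2) : ℝ) ^ (((n : ℝ) - 3) / 2)) *
        Real.exp (-(Q ^ 2 / 2 + Q / 2 + 1 / 4)) ≤ F n Q r t := by
      unfold F
      apply mul_le_mul _ c1 (Real.exp_pos _).le
      · have hb : (0:ℝ) ≤ 1 + (1 + r) / t := by positivity
        have ht0' := ht0.le
        positivity
      apply mul_le_mul _ b1 (Real.rpow_nonneg (by positivity) _)
        (by positivity)
      calc (2 * r ^ 2 : ℝ) ^ (-(3:ℝ)/2) * 1 ≤ t ^ (-(3:ℝ)/2) * 1 := by
            apply mul_le_mul_of_nonneg_right a1 zero_le_one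
        _ ≤ t ^ (-(3:ℝ)/2) * (1 + r) := by
            apply mul_le_mul_of_nonneg_left (by linarith) (Real.rpow_nonneg ht0.le _)
    refine le_trans (le_of_eq ?_) key
    have A1 : (2 * r ^ 2 : ℝ) ^ (-(3:ℝ)/2) = 2 ^ (-(3:ℝ)/2) * r ^ (-3 : ℝ) := by
      rw [Real.mul_rpow (by norm_num) (sq_nonneg r), rpow_sq hr]
      norm_num
    have A2 : (1 / (2 * r ^ 2) : ℝ) ^ (((n : ℝ) - 3) / 2) =
        2 ^ (-(((n : ℝ) - 3) / 2)) * r ^ (-((n : ℝ) - 3)) := by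
      rw [one_div, Real.inv_rpow h2r2.le, ← Real.rpow_neg h2r2.le,
        Real.mul_rpow (by norm_num) (sq_nonneg r), rpow_sq hr,
        show (2:ℝ) * -(((n:ℝ) - 3) / 2) = -((n:ℝ) - 3) from by ring]
    have A3 : r ^ (-(3:ℝ)) * r ^ (-((n : ℝ) - 3)) = r ^ (-(n:ℝ)) := by
      rw [← Real.rpow_add hr]
      congr 1
      ring
    rw [hcL, A1, A2, ← A3]
    ring
  have hint := intOn_Ioi hn hQ hr hr1
  have hnn : 0 ≤ᵐ[volume.restrict (Ioi (0:ℝ))] F n Q r :=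
    (ae_restrict_iff' measurableSet_Ioi).2 (ae_of_all _ fun t ht => F_nonneg hr.le ht)
  have step1 : cL * r ^ (-(n:ℝ)) * (volume (Ioc (r ^ 2) (2 * r ^ 2))).toReal ≤
      ∫ t in Ioc (r ^ 2) (2 * r ^ 2), F n Q r t :=
    setIntegral_ge_of_const_le_real measurableSet_Ioc measure_Ioc_lt_top.ne hpt
      (hint.mono_set hsub)
  have hvol : (volume (Ioc (r ^ 2) (2 * r ^ 2))).toReal = r ^ 2 := by
    rw [Real.volume_Ioc, ENNReal.toReal_ofReal (by nlinarith)]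
    ring
  have step2 : ∫ t in Ioc (r ^ 2) (2 * r ^ 2), F n Q r t ≤ ∫ t in Ioi (0:ℝ), F n Q r t :=
    setIntegral_mono_set hint hnn (HasSubset.Subset.eventuallyLE hsub)
  have heq : cL * r ^ ((2:ℝ) - n) = cL * r ^ (-(n:ℝ)) * r ^ 2 := by
    have h : r ^ ((2:ℝ) - n) = r ^ (-(n:ℝ)) * r ^ (2:ℕ) := by
      rw [← Real.rpow_natCast r 2, ← Real.rpow_add hr]
      congr 1
      push_cast
      ring
    rw [h]
    ring
  rw [heq, ← hvol]
  exact step1.trans step2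

end Stmt17Aux

open Stmt17Aux

theorem stmt_17 (n : ℕ) (hn : 3 ≤ n) (Q : ℝ) (hQ : 0 < Q) :
    ∃ c C : ℝ, 0 < c ∧ c ≤ C ∧ ∀ r : ℝ, 0 < r → r ≤ 1 →
      c * r ^ ((2 : ℝ) - n) ≤
        (∫ t in Ioi (0 : ℝ), t ^ (-(3 : ℝ) / 2) * (1 + r) *
          (1 + (1 + r) / t) ^ (((n : ℝ) - 3) / 2) *
          Real.exp (-Q ^ 2 * t / 4 - Q * r / 2 - r ^ 2 / (4 * t))) ∧
      (∫ t in Ioi (0 : ℝ), t ^ (-(3 : ℝ) / 2) * (1 + r) *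
          (1 + (1 + r) / t) ^ (((n : ℝ) - 3) / 2) *
          Real.exp (-Q ^ 2 * t / 4 - Q * r / 2 - r ^ 2 / (4 * t))) ≤
        C * r ^ ((2 : ℝ) - n) := by
  have hn' : (3:ℝ) ≤ n := by exact_mod_cast hn
  set cL : ℝ := 2 ^ (-(3:ℝ)/2) * 2 ^ (-(((n : ℝ) - 3) / 2)) *
    Real.exp (-(Q ^ 2 / 2 + Q / 2 + 1 / 4)) with hcL
  set CU : ℝ := (2 * 3 ^ (((n : ℝ) - 3) / 2) * n.factorial * 4 ^ n) / ((n : ℝ) / 2 + 1) +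
      2 * 3 ^ (((n : ℝ) - 3) / 2) / ((n : ℝ) / 2 - 1) +
      2 * 3 ^ (((n : ℝ) - 3) / 2) * 2 with hCU
  have hcLpos : 0 < cL := by rw [hcL]; positivity
  have hCUpos : 0 < CU := by
    rw [hCU]
    have h1 : (0:ℝ) < (n : ℝ) / 2 + 1 := by linarith
    have h2 : (0:ℝ) < (n : ℝ) / 2 - 1 := by linarith
    have hf : (0:ℝ) < (n.factorial : ℝ) := by exact_mod_cast n.factorial_pos
    positivity
  refine ⟨min cL CU, max cL CU, lt_min hcLpos hCUpos, min_le_max, fun r hr hr1 => ?_⟩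
  have hX : (0:ℝ) ≤ r ^ ((2:ℝ) - n) := (Real.rpow_pos_of_pos hr _).le
  have hFeq : (∫ t in Ioi (0 : ℝ), t ^ (-(3 : ℝ) / 2) * (1 + r) *
          (1 + (1 + r) / t) ^ (((n : ℝ) - 3) / 2) *
          Real.exp (-Q ^ 2 * t / 4 - Q * r / 2 - r ^ 2 / (4 * t))) =
      ∫ t in Ioi (0:ℝ), F n Q r t := rfl
  rw [hFeq]
  constructor
  · calc min cL CU * r ^ ((2:ℝ) - n) ≤ cL * r ^ ((2:ℝ) - n) :=
          mul_le_mul_of_nonneg_right (min_le_left _ _) hX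
      _ ≤ _ := lower hn hQ hr hr1
  · calc ∫ t in Ioi (0:ℝ), F n Q r t ≤ CU * r ^ ((2:ℝ) - n) := upper hn hQ hr hr1
      _ ≤ max cL CU * r ^ ((2:ℝ) - n) :=
          mul_le_mul_of_nonneg_right (le_max_right _ _) hX
end

section
/- Let n > 2 be a real number and λ > 0. Then lim_{r → 0⁺} r^{n−2} · ∫₀^∞ t^{−n/2} exp(−λ t − r²/(4t)) dt = 2^{n−2} · Γ(n/2 − 1), i.e. ∫₀^∞ t^{−n/2} exp(−λ t − r²/(4t)) dt is asymptotic to Γ(n/2 − 1) · (r²/4)^{1−n/2} as r → 0⁺. -/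
open MeasureTheory Real Set Filter

-- the limiting integrand
noncomputable def gfun (n : ℝ) : ℝ → ℝ := fun s => s ^ (-n / 2) * Real.exp (-(1 / (4 * s)))

lemma gfun_eq (n : ℝ) : ∀ x ∈ Ioi (0 : ℝ),
    x ^ ((-1 : ℝ) - 1) • gfun n (x ^ (-1 : ℝ)) = x ^ (n / 2 - 2) * Real.exp (-(1/4) * x) := by
  intro x hx
  have hx0 : (0 : ℝ) < x := hx
  simp only [gfun, smul_eq_mul]
  rw [← Real.rpow_mul hx0.le, Real.rpow_neg_one, ← mul_assoc, ← Real.rpow_add hx0]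
  congr 1
  · congr 1; ring
  · congr 1; field_simp

lemma gfun_integrable (n : ℝ) (hn : 2 < n) : IntegrableOn (gfun n) (Ioi (0 : ℝ)) := by
  rw [← integrableOn_Ioi_comp_rpow_iff' (gfun n) (p := -1) (by norm_num)]
  have : IntegrableOn (fun x : ℝ => x ^ (n / 2 - 2) * Real.exp (-(1/4) * x ^ (1:ℝ)))
      (Ioi (0 : ℝ)) :=
    integrableOn_rpow_mul_exp_neg_mul_rpow (by linarith) (by norm_num) (by norm_num)
  have h2 : IntegrableOn (fun x : ℝ => x ^ (n / 2 - 2) * Real.exp (-(1/4) * x))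
      (Ioi (0 : ℝ)) :=
    this.congr_fun (fun x hx => by beta_reduce; rw [Real.rpow_one]) measurableSet_Ioi
  exact h2.congr_fun (fun x hx => (gfun_eq n x hx).symm) measurableSet_Ioi

lemma gfun_integral (n : ℝ) (hn : 2 < n) :
    ∫ s in Ioi (0 : ℝ), gfun n s = (2 : ℝ) ^ (n - 2) * Real.Gamma (n / 2 - 1) := by
  rw [← integral_comp_rpow_Ioi (gfun n) (p := -1) (by norm_num)]
  have h1 : ∀ x ∈ Ioi (0 : ℝ),
      (|(-1 : ℝ)| * x ^ ((-1 : ℝ) - 1)) • gfun n (x ^ (-1 : ℝ))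
        = x ^ (n / 2 - 2) * Real.exp (-(1/4) * x) := by
    intro x hx
    rw [abs_neg, abs_one, one_mul]
    exact gfun_eq n x hx
  rw [setIntegral_congr_fun measurableSet_Ioi h1]
  have h2 : ∀ x ∈ Ioi (0 : ℝ),
      x ^ (n / 2 - 2) * Real.exp (-(1/4) * x)
        = x ^ (n / 2 - 2) * Real.exp (-(1/4) * x ^ (1:ℝ)) := by
    intro x hx; rw [Real.rpow_one]
  rw [setIntegral_congr_fun measurableSet_Ioi h2]
  rw [integral_rpow_mul_exp_neg_mul_rpow (by norm_num) (by linarith) (by norm_num)]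
  have h3 : (n / 2 - 2 + 1) / 1 = n / 2 - 1 := by ring
  have h4 : ((1:ℝ)/4) ^ (-(n / 2 - 2 + 1) / 1) = (2:ℝ) ^ (n - 2) := by
    have : ((1:ℝ)/4) = (2:ℝ) ^ (-2 : ℝ) := by
      rw [Real.rpow_neg (by norm_num), show ((2:ℝ))^(2:ℝ) = 4 by
        rw [show (2:ℝ) = ((2:ℕ):ℝ) by norm_num, Real.rpow_natCast]; norm_num]
      norm_num
    rw [this, ← Real.rpow_mul (by norm_num)]
    congr 1; ring
  rw [h3, h4]
  ring

theorem stmt_19 (n : ℝ) (hn : 2 < n) (lam : ℝ) (hlam : 0 < lam) :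
    Tendsto (fun r : ℝ => r ^ (n - 2) *
        ∫ t in Ioi (0 : ℝ), t ^ (-n / 2) * Real.exp (-lam * t - r ^ 2 / (4 * t)))
      (nhdsWithin 0 (Ioi 0))
      (nhds ((2 : ℝ) ^ (n - 2) * Real.Gamma (n / 2 - 1))) := by
  set F : ℝ → ℝ → ℝ :=
    fun r s => s ^ (-n / 2) * Real.exp (-(lam * r ^ 2) * s - 1 / (4 * s)) with hF
  -- step 1: scaling identity for r > 0
  have key : ∀ r : ℝ, 0 < r →
      r ^ (n - 2) * ∫ t in Ioi (0 : ℝ), t ^ (-n / 2) * Real.exp (-lam * t - r ^ 2 / (4 * t))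
        = ∫ s in Ioi (0 : ℝ), F r s := by
    intro r hr
    have hr2 : (0 : ℝ) < r ^ 2 := by positivity
    have := integral_comp_mul_left_Ioi
      (fun t => t ^ (-n / 2) * Real.exp (-lam * t - r ^ 2 / (4 * t))) 0 hr2
    rw [mul_zero] at this
    have heq : ∀ s ∈ Ioi (0 : ℝ),
        (fun t => t ^ (-n / 2) * Real.exp (-lam * t - r ^ 2 / (4 * t))) (r ^ 2 * s)
          = (r ^ 2) ^ (-n / 2) * F r s := by
      intro s hs
      have hs0 : (0 : ℝ) < s := hs
      simp only [hF]
      rw [Real.mul_rpow hr2.le hs0.le]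
      have harg : -lam * (r ^ 2 * s) - r ^ 2 / (4 * (r ^ 2 * s))
          = -(lam * r ^ 2) * s - 1 / (4 * s) := by
        field_simp
      rw [harg]; ring
    rw [setIntegral_congr_fun measurableSet_Ioi heq, integral_const_mul] at this
    rw [smul_eq_mul] at this
    beta_reduce at this
    have hIt : (∫ t in Ioi (0:ℝ), t ^ (-n / 2) * Real.exp (-lam * t - r ^ 2 / (4 * t)))
        = r ^ 2 * ((r ^ 2) ^ (-n / 2) * ∫ s in Ioi (0:ℝ), F r s) := by
      rw [this, ← mul_assoc, mul_inv_cancel₀ hr2.ne', one_mul]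
    have hpow : r ^ (n - 2) * r ^ 2 * (r ^ 2) ^ (-n / 2) = 1 := by
      rw [← Real.rpow_natCast r 2, ← Real.rpow_mul hr.le, ← Real.rpow_add hr,
        ← Real.rpow_add hr]
      push_cast
      rw [show n - 2 + 2 + 2 * (-n / 2) = 0 by ring, Real.rpow_zero]
    rw [hIt, ← mul_assoc, ← mul_assoc, hpow, one_mul]
  -- step 2: dominated convergence
  have hmeas : ∀ r : ℝ, AEStronglyMeasurable (F r) (volume.restrict (Ioi (0:ℝ))) := by
    intro r
    apply Measurable.aestronglyMeasurable
    fun_prop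
  have htend : Tendsto (fun r => ∫ s in Ioi (0:ℝ), F r s) (nhdsWithin 0 (Ioi 0))
      (nhds (∫ s in Ioi (0:ℝ), gfun n s)) := by
    apply tendsto_integral_filter_of_dominated_convergence (gfun n)
    · exact Eventually.of_forall hmeas
    · refine Eventually.of_forall fun r => ?_
      rw [ae_restrict_iff' measurableSet_Ioi]
      refine Eventually.of_forall fun s hs => ?_
      have hs0 : (0 : ℝ) < s := hs
      simp only [hF, gfun, Real.norm_eq_abs, abs_mul, abs_of_nonneg (Real.exp_pos _).le,
        abs_of_nonneg (Real.rpow_nonneg hs0.le _)]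
      apply mul_le_mul_of_nonneg_left _ (Real.rpow_nonneg hs0.le _)
      apply Real.exp_le_exp.mpr
      have : 0 ≤ lam * r ^ 2 * s := by positivity
      nlinarith
    · exact gfun_integrable n hn
    · rw [ae_restrict_iff' measurableSet_Ioi]
      refine Eventually.of_forall fun s hs => ?_
      have hs0 : (0 : ℝ) < s := hs
      have hc : Continuous fun r : ℝ => F r s := by
        simp only [hF]; fun_prop
      have := (hc.tendsto 0).mono_left (nhdsWithin_le_nhds (s := Ioi (0:ℝ)))
      convert this using 2
      simp only [hF, gfun]
      norm_num
  rw [← gfun_integral n hn]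
  apply htend.congr'
  filter_upwards [self_mem_nhdsWithin] with r hr
  exact (key r hr).symm
end
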